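/- arXiv:2309.14632 — 7 statements merged into one kernel-verified Lean document; each statement's English description precedes it below -/
import Mathlib

section
/- Let X be an nq-space (a topological space for which nq(X) is defined). Then the density of X satisfies d(X) ≤ πχ(X)^(c(X)·nq(X)), i.e., X has a dense subset of cardinality at most πχ(X) raised (in the sense of cardinal exponentiation) to the power c(X)·nq(X). -/
open Cardinal Set TopologicalSpace

universe u

/-- The density of a space: the least cardinality of a dense subset. -/
noncomputable def dens (X : Type u) [TopologicalSpace X] : Cardinal.{u} :=
  sInf {c : Cardinal.{u} | ∃ D : Set X, Dense D ∧ #D = c}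

/-- A local π-base at a point: a family of nonempty open sets such that every
open set containing the point contains a member of the family. -/
def IsLocalPiBase (X : Type u) [TopologicalSpace X] (x : X) (𝒱 : Set (Set X)) : Prop :=
  (∀ V ∈ 𝒱, IsOpen V ∧ V.Nonempty) ∧
    ∀ U : Set X, IsOpen U → x ∈ U → ∃ V ∈ 𝒱, V ⊆ U

/-- The π-character at a point: the least infinite cardinality of a local π-base. -/
noncomputable def piCharPoint (X : Type u) [TopologicalSpace X] (x : X) : Cardinal.{u} :=
  sInf {κ : Cardinal.{u} | ℵ₀ ≤ κ ∧ ∃ 𝒱 : Set (Set X), IsLocalPiBase X x 𝒱 ∧ #𝒱 ≤ κ}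

/-- The π-character of a space. -/
noncomputable def piChar (X : Type u) [TopologicalSpace X] : Cardinal.{u} :=
  ⨆ x : X, piCharPoint X x

/-- A π-base for a space. -/
def IsPiBase (X : Type u) [TopologicalSpace X] (𝒱 : Set (Set X)) : Prop :=
  (∀ V ∈ 𝒱, IsOpen V ∧ V.Nonempty) ∧
    ∀ U : Set X, IsOpen U → U.Nonempty → ∃ V ∈ 𝒱, V ⊆ U

/-- The π-weight of a space: the least infinite cardinality of a π-base. -/
noncomputable def piWeight (X : Type u) [TopologicalSpace X] : Cardinal.{u} :=
  sInf {κ : Cardinal.{u} | ℵ₀ ≤ κ ∧ ∃ 𝒱 : Set (Set X), IsPiBase X 𝒱 ∧ #𝒱 ≤ κ}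

/-- The cellularity of a space: the least infinite cardinal bounding the size of
every pairwise disjoint family of nonempty open sets. -/
noncomputable def cellularity (X : Type u) [TopologicalSpace X] : Cardinal.{u} :=
  sInf {κ : Cardinal.{u} | ℵ₀ ≤ κ ∧ ∀ 𝒞 : Set (Set X),
    (∀ U ∈ 𝒞, IsOpen U ∧ U.Nonempty) → 𝒞.PairwiseDisjoint id → #𝒞 ≤ κ}

/-- The set of infinite cardinals κ witnessing the nonquasiregularity degree:
every nonempty open set U contains a nonempty set ⋂₀ 𝒱 with 𝒱 an open family of
size at most κ and ⋂_{V ∈ 𝒱} cl V ⊆ U. -/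
def nqSet (X : Type u) [TopologicalSpace X] : Set Cardinal.{u} :=
  {κ : Cardinal.{u} | ℵ₀ ≤ κ ∧ ∀ U : Set X, IsOpen U → U.Nonempty →
    ∃ 𝒱 : Set (Set X), (∀ V ∈ 𝒱, IsOpen V) ∧ #𝒱 ≤ κ ∧
      (⋂₀ 𝒱).Nonempty ∧ (⋂ V ∈ 𝒱, closure V) ⊆ U}

/-- A space is an nq-space if its nonquasiregularity degree is defined. -/
def IsNqSpace (X : Type u) [TopologicalSpace X] : Prop :=
  (nqSet X).Nonempty

/-- The nonquasiregularity degree of a space. -/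
noncomputable def nq (X : Type u) [TopologicalSpace X] : Cardinal.{u} :=
  sInf (nqSet X)

/-- The closed pseudocharacter at a point. -/
noncomputable def psiCPoint (X : Type u) [TopologicalSpace X] (x : X) : Cardinal.{u} :=
  sInf {κ : Cardinal.{u} | ℵ₀ ≤ κ ∧ ∃ 𝒱 : Set (Set X),
    (∀ V ∈ 𝒱, IsOpen V ∧ x ∈ V) ∧ #𝒱 ≤ κ ∧ (⋂ V ∈ 𝒱, closure V) = {x}}

/-- The closed pseudocharacter of a space. -/
noncomputable def psiC (X : Type u) [TopologicalSpace X] : Cardinal.{u} :=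
  sInf {κ : Cardinal.{u} | ℵ₀ ≤ κ ∧ ∀ x : X, ∃ 𝒱 : Set (Set X),
    (∀ V ∈ 𝒱, IsOpen V ∧ x ∈ V) ∧ #𝒱 ≤ κ ∧ (⋂ V ∈ 𝒱, closure V) = {x}}

/-- The dense closed pseudocharacter of a space. -/
noncomputable def dPsiC (X : Type u) [TopologicalSpace X] : Cardinal.{u} :=
  sInf {κ : Cardinal.{u} | ℵ₀ ≤ κ ∧ ∃ D : Set X, Dense D ∧ ∀ d ∈ D, psiCPoint X d ≤ κ}

/-- The weak closed pseudocharacter at a point: the least infinite cardinality of a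
family 𝒱 of open sets with ⋂_{V ∈ 𝒱} cl V = {x}. -/
noncomputable def wPsiCPoint (X : Type u) [TopologicalSpace X] (x : X) : Cardinal.{u} :=
  sInf {κ : Cardinal.{u} | ℵ₀ ≤ κ ∧ ∃ 𝒱 : Set (Set X),
    (∀ V ∈ 𝒱, IsOpen V) ∧ #𝒱 ≤ κ ∧ (⋂ V ∈ 𝒱, closure V) = {x}}

/-- The weak closed pseudocharacter of a space. -/
noncomputable def wPsiC (X : Type u) [TopologicalSpace X] : Cardinal.{u} :=
  ⨆ x : X, wPsiCPoint X x

/-- The pseudocharacter of a space: the least infinite cardinal κ such that every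
point is the intersection of at most κ open sets. -/
noncomputable def psi (X : Type u) [TopologicalSpace X] : Cardinal.{u} :=
  sInf {κ : Cardinal.{u} | ℵ₀ ≤ κ ∧ ∀ x : X, ∃ 𝒱 : Set (Set X),
    (∀ V ∈ 𝒱, IsOpen V) ∧ #𝒱 ≤ κ ∧ ⋂₀ 𝒱 = {x}}

/-- The Lindelöf degree of a space. -/
noncomputable def lindelofDegree (X : Type u) [TopologicalSpace X] : Cardinal.{u} :=
  sInf {κ : Cardinal.{u} | ℵ₀ ≤ κ ∧ ∀ 𝒰 : Set (Set X), (∀ U ∈ 𝒰, IsOpen U) →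
    ⋃₀ 𝒰 = Set.univ → ∃ 𝒱 ⊆ 𝒰, #𝒱 ≤ κ ∧ ⋃₀ 𝒱 = Set.univ}

/-- The cardinality of the collection of regular open subsets of a space. -/
noncomputable def cardRO (X : Type u) [TopologicalSpace X] : Cardinal.{u} :=
  #{R : Set X | R = interior (closure R)}

/-- A space is quasiregular if every nonempty open set contains a nonempty open
set whose closure is contained in it. -/
def Quasiregular (X : Type u) [TopologicalSpace X] : Prop :=
  ∀ U : Set X, IsOpen U → U.Nonempty →
    ∃ V : Set X, IsOpen V ∧ V.Nonempty ∧ closure V ⊆ U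

set_option linter.unusedSectionVars false


section NqAux

variable {X : Type u} [TopologicalSpace X]

/-- Union of the chosen local π-bases over a set of points. -/
def auxBU (B : X → Set (Set X)) (A : Set X) : Set (Set X) := ⋃ x ∈ A, B x

lemma auxBU_mono (B : X → Set (Set X)) {A A' : Set X} (h : A ⊆ A') :
    auxBU B A ⊆ auxBU B A' :=
  Set.biUnion_subset_biUnion_left h

/-- The "target" set of a family of families. -/
def auxT (X : Type u) [TopologicalSpace X] (𝒢 : Set (Set (Set X))) : Set X :=
  ⋂ 𝒲 ∈ 𝒢, (closure (⋃₀ 𝒲))ᶜ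

/-- `𝒢` is a suitable family of subfamilies of the π-bases of points of `A`. -/
def auxGood (B : X → Set (Set X)) (c n : Cardinal.{u}) (A : Set X)
    (𝒢 : Set (Set (Set X))) : Prop :=
  Cardinal.mk 𝒢 ≤ n ∧ ∀ 𝒲 ∈ 𝒢, 𝒲 ⊆ auxBU B A ∧ #𝒲 ≤ c

lemma auxGood_mono (B : X → Set (Set X)) (c n : Cardinal.{u}) {A A' : Set X}
    (h : A ⊆ A') {𝒢 : Set (Set (Set X))} (hg : auxGood B c n A 𝒢) :
    auxGood B c n A' 𝒢 :=
  ⟨hg.1, fun 𝒲 h𝒲 => ⟨((hg.2 𝒲 h𝒲).1).trans (auxBU_mono B h), (hg.2 𝒲 h𝒲).2⟩⟩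

open Classical in
/-- A choice of point in `auxT 𝒢` when it is nonempty. -/
noncomputable def auxPt [Nonempty X] (𝒢 : Set (Set (Set X))) : X :=
  if h : (auxT X 𝒢).Nonempty then h.choose else Classical.arbitrary X

open Classical in
lemma auxPt_mem [Nonempty X] {𝒢 : Set (Set (Set X))} (h : (auxT X 𝒢).Nonempty) :
    auxPt 𝒢 ∈ auxT X 𝒢 := by
  rw [auxPt]
  rw [dif_pos h]
  exact h.choose_spec

/-- One step of the closing-off construction. -/
noncomputable def auxF [Nonempty X] (B : X → Set (Set X)) (c n : Cardinal.{u})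
    (A : Set X) : Set X :=
  A ∪ auxPt '' {𝒢 | auxGood B c n A 𝒢 ∧ (auxT X 𝒢).Nonempty}

lemma auxF_mono [Nonempty X] (B : X → Set (Set X)) (c n : Cardinal.{u})
    {A A' : Set X} (h : A ⊆ A') : auxF B c n A ⊆ auxF B c n A' :=
  Set.union_subset_union h (Set.image_mono fun 𝒢 hg => ⟨auxGood_mono B c n h hg.1, hg.2⟩)

/-- The transfinite iteration of the closing-off construction. -/
noncomputable def auxChain [Nonempty X] (B : X → Set (Set X)) (c n : Cardinal.{u})
    (α : Ordinal.{u}) : Set X :=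
  auxF B c n (⋃ β, ⋃ (_ : β < α), auxChain B c n β)
termination_by α

lemma auxChain_def [Nonempty X] (B : X → Set (Set X)) (c n : Cardinal.{u})
    (α : Ordinal.{u}) :
    auxChain B c n α = auxF B c n (⋃ β, ⋃ (_ : β < α), auxChain B c n β) := by
  rw [auxChain]

lemma auxChain_mono [Nonempty X] (B : X → Set (Set X)) (c n : Cardinal.{u})
    {α γ : Ordinal.{u}} (h : α ≤ γ) : auxChain B c n α ⊆ auxChain B c n γ := by
  rw [auxChain_def, auxChain_def]
  refine auxF_mono B c n (Set.iUnion₂_subset fun β hβ => ?_)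
  exact Set.subset_iUnion₂ (s := fun β (_ : β < γ) => auxChain B c n β) β (hβ.trans_le h)

lemma auxChain_lt_subset [Nonempty X] (B : X → Set (Set X)) (c n : Cardinal.{u})
    {β α : Ordinal.{u}} (h : β < α) : auxChain B c n β ⊆ auxChain B c n α := by
  rw [auxChain_def B c n α]
  refine Set.Subset.trans ?_ Set.subset_union_left
  exact Set.subset_iUnion₂ (s := fun β (_ : β < α) => auxChain B c n β) β h

/-- Refinement lemma via cellularity: every family of nonempty open sets has a
subfamily of size at most the cellularity whose union is dense in the union. -/
lemma cell_refine (c : Cardinal.{u})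
    (hc : ∀ 𝒞 : Set (Set X), (∀ U ∈ 𝒞, IsOpen U ∧ U.Nonempty) →
      𝒞.PairwiseDisjoint id → #𝒞 ≤ c)
    (𝒜 : Set (Set X)) (h𝒜 : ∀ A ∈ 𝒜, IsOpen A ∧ A.Nonempty) :
    ∃ 𝒲, 𝒲 ⊆ 𝒜 ∧ #𝒲 ≤ c ∧ ⋃₀ 𝒜 ⊆ closure (⋃₀ 𝒲) := by
  classical
  set S : Set (Set (Set X)) :=
    {𝒪 | (∀ O ∈ 𝒪, IsOpen O ∧ O.Nonempty ∧ ∃ A ∈ 𝒜, O ⊆ A) ∧ 𝒪.PairwiseDisjoint id}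
    with hS
  obtain ⟨𝒪, h𝒪max⟩ : ∃ 𝒪, Maximal (· ∈ S) 𝒪 := by
    apply zorn_subset
    intro ch hch hchain
    refine ⟨⋃₀ ch, ⟨?_, ?_⟩, fun s hs => Set.subset_sUnion_of_mem hs⟩
    · rintro O ⟨s, hs, hOs⟩
      exact (hch hs).1 O hOs
    · intro O₁ h₁ O₂ h₂ hne
      obtain ⟨s₁, hs₁, hO₁⟩ := h₁
      obtain ⟨s₂, hs₂, hO₂⟩ := h₂
      rcases eq_or_ne s₁ s₂ with rfl | hss
      · exact (hch hs₁).2 hO₁ hO₂ hne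
      · rcases hchain hs₁ hs₂ hss with h | h
        · exact (hch hs₂).2 (h hO₁) hO₂ hne
        · exact (hch hs₁).2 hO₁ (h hO₂) hne
  have h𝒪 := h𝒪max.1
  have hsel : ∀ O : 𝒪, ∃ A ∈ 𝒜, (O : Set X) ⊆ A := fun O => (h𝒪.1 O O.2).2.2
  choose g hg1 hg2 using hsel
  refine ⟨Set.range g, Set.range_subset_iff.2 hg1, mk_range_le.trans ?_, ?_⟩
  · exact hc 𝒪 (fun O hO => ⟨(h𝒪.1 O hO).1, (h𝒪.1 O hO).2.1⟩) h𝒪.2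
  · -- ⋃₀ 𝒜 ⊆ closure (⋃₀ range g)
    intro x hx
    obtain ⟨A, hA, hxA⟩ := hx
    rw [mem_closure_iff]
    intro U hU hxU
    set N := U ∩ A with hN
    have hNopen : IsOpen N := hU.inter (h𝒜 A hA).1
    have hNne : N.Nonempty := ⟨x, hxU, hxA⟩
    by_cases hmeet : (N ∩ ⋃₀ 𝒪).Nonempty
    · obtain ⟨y, hyN, O, hO, hyO⟩ := hmeet
      exact ⟨y, hyN.1, g ⟨O, hO⟩, ⟨⟨O, hO⟩, rfl⟩, hg2 ⟨O, hO⟩ hyO⟩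
    · exfalso
      rw [Set.not_nonempty_iff_eq_empty] at hmeet
      have hNnotmem : N ∉ 𝒪 := by
        intro hNmem
        obtain ⟨y, hy⟩ := hNne
        have : y ∈ N ∩ ⋃₀ 𝒪 := ⟨hy, N, hNmem, hy⟩
        rw [hmeet] at this
        exact this
      have hins : insert N 𝒪 ∈ S := by
        constructor
        · rintro O (rfl | hO)
          · exact ⟨hNopen, hNne, A, hA, Set.inter_subset_right⟩
          · exact h𝒪.1 O hO
        · refine h𝒪.2.insert fun O hO _ => ?_
          refine Set.disjoint_left.2 fun y hyN hyO => ?_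
          have : y ∈ N ∩ ⋃₀ 𝒪 := ⟨hyN, O, hO, hyO⟩
          rw [hmeet] at this
          exact this
      have := h𝒪max.2 hins (Set.subset_insert N 𝒪)
      exact hNnotmem (this (Set.mem_insert N 𝒪))

end NqAux

lemma mem_auxBU {X : Type u} {B : X → Set (Set X)} {A : Set X} {W : Set X} :
    W ∈ auxBU B A ↔ ∃ x ∈ A, W ∈ B x := by simp [auxBU]

lemma mem_auxT {X : Type u} [TopologicalSpace X] {𝒢 : Set (Set (Set X))} {x : X} :
    x ∈ auxT X 𝒢 ↔ ∀ 𝒲 ∈ 𝒢, x ∉ closure (⋃₀ 𝒲) := by simp [auxT]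

/-- If `X` is an nq-space then `d(X) ≤ πχ(X)^(c(X)·nq(X))`. -/
theorem stmt_0 (X : Type u) [TopologicalSpace X] (hX : IsNqSpace X) :
    dens X ≤ piChar X ^ (cellularity X * nq X) := by
  classical
  rcases isEmpty_or_nonempty X with hE | hNE
  · have hd : Dense (∅ : Set X) := fun x => (IsEmpty.false x).elim
    refine le_trans (csInf_le' ⟨∅, hd, rfl⟩) ?_
    rw [Cardinal.mk_emptyCollection]
    exact zero_le
  -- nonquasiregularity degree data
  have hnq' := csInf_mem hX
  simp only [nqSet, Set.mem_setOf_eq] at hnq'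
  obtain ⟨hn0, hnq⟩ : ℵ₀ ≤ nq X ∧ ∀ U : Set X, IsOpen U → U.Nonempty →
      ∃ 𝒱 : Set (Set X), (∀ V ∈ 𝒱, IsOpen V) ∧ #𝒱 ≤ nq X ∧
        (⋂₀ 𝒱).Nonempty ∧ (⋂ V ∈ 𝒱, closure V) ⊆ U := hnq'
  -- cellularity data
  have hcellne : {κ : Cardinal.{u} | ℵ₀ ≤ κ ∧ ∀ 𝒞 : Set (Set X),
      (∀ U ∈ 𝒞, IsOpen U ∧ U.Nonempty) → 𝒞.PairwiseDisjoint id → #𝒞 ≤ κ}.Nonempty :=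
    ⟨max ℵ₀ #(Set X), le_max_left _ _, fun 𝒞 _ _ => (mk_set_le 𝒞).trans (le_max_right _ _)⟩
  obtain ⟨hc0, hcell⟩ : ℵ₀ ≤ cellularity X ∧ ∀ 𝒞 : Set (Set X),
      (∀ U ∈ 𝒞, IsOpen U ∧ U.Nonempty) → 𝒞.PairwiseDisjoint id → #𝒞 ≤ cellularity X :=
    csInf_mem hcellne
  -- π-character data
  have hpiP : ∀ x : X, ℵ₀ ≤ piCharPoint X x ∧ ∃ 𝒱 : Set (Set X),
      IsLocalPiBase X x 𝒱 ∧ #𝒱 ≤ piCharPoint X x := by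
    intro x
    have hne : {κ : Cardinal.{u} | ℵ₀ ≤ κ ∧ ∃ 𝒱 : Set (Set X),
        IsLocalPiBase X x 𝒱 ∧ #𝒱 ≤ κ}.Nonempty :=
      ⟨max ℵ₀ #(Set X), le_max_left _ _,
        {V : Set X | IsOpen V ∧ V.Nonempty},
        ⟨fun V hV => hV, fun U hU hxU => ⟨U, ⟨hU, x, hxU⟩, subset_rfl⟩⟩,
        (mk_set_le _).trans (le_max_right _ _)⟩
    exact csInf_mem hne
  choose hpp B hB1 hB2 using hpiP
  have hlamx : ∀ x : X, piCharPoint X x ≤ piChar X := fun x =>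
    le_ciSup (Cardinal.bddAbove_range _) x
  have hB2' : ∀ x, #(B x) ≤ piChar X := fun x => (hB2 x).trans (hlamx x)
  have hlam0 : ℵ₀ ≤ piChar X := (hpp (Classical.arbitrary X)).trans (hlamx _)
  -- abbreviations
  set lam := piChar X with hlam_def
  set c := cellularity X with hc_def
  set n := nq X with hn_def
  set μ := c * n with hμ_def
  set ρ := lam ^ μ with hρ_def
  -- cardinal arithmetic
  have h1n : (1 : Cardinal) ≤ n := le_trans (le_of_lt one_lt_aleph0) hn0
  have h1c : (1 : Cardinal) ≤ c := le_trans (le_of_lt one_lt_aleph0) hc0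
  have hcμ : c ≤ μ := by rw [hμ_def]; exact le_mul_of_one_le_right zero_le h1n
  have hnμ : n ≤ μ := by rw [hμ_def]; exact le_mul_of_one_le_left zero_le h1c
  have hμ0 : ℵ₀ ≤ μ := hc0.trans hcμ
  have h1μ : (1 : Cardinal) ≤ μ := le_trans (le_of_lt one_lt_aleph0) hμ0
  have hlamρ : lam ≤ ρ := by rw [hρ_def]; exact self_le_power lam h1μ
  have hρ0 : ℵ₀ ≤ ρ := hlam0.trans hlamρ
  have hρc : ρ ^ c = ρ := by
    rw [hρ_def, ← power_mul, mul_eq_max hμ0 hc0, max_eq_left hcμ]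
  have hρn : ρ ^ n = ρ := by
    rw [hρ_def, ← power_mul, mul_eq_max hμ0 hn0, max_eq_left hnμ]
  have h2lam : (2 : Cardinal) ≤ lam := le_trans (by exact_mod_cast (nat_lt_aleph0 2).le) hlam0
  have hνρ : Order.succ μ ≤ ρ := by
    rw [hρ_def]
    exact le_trans (Order.succ_le_of_lt (cantor μ)) (power_le_power_right h2lam)
  have hν0 : ℵ₀ ≤ Order.succ μ := hμ0.trans (Order.le_succ μ)
  -- the one-step operator does not increase cardinality beyond ρ
  have hFcard : ∀ A : Set X, #A ≤ ρ → #(auxF B c n A) ≤ ρ := by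
    intro A hA
    have hBUA : #(auxBU B A) ≤ ρ := by
      have h1 : #(auxBU B A) ≤ #A * ⨆ x : A, #(B (x : X)) := by
        simp only [auxBU]
        exact mk_biUnion_le B A
      refine h1.trans ?_
      have h2 : ⨆ x : A, #(B (x : X)) ≤ ρ := ciSup_le' fun x => (hB2' x).trans hlamρ
      calc #A * ⨆ x : A, #(B (x : X)) ≤ ρ * ρ := mul_le_mul' hA h2
        _ = ρ := mul_eq_self hρ0
    have hP : #{𝒲 : Set (Set X) | 𝒲 ⊆ auxBU B A ∧ #𝒲 ≤ c} ≤ ρ := by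
      refine le_trans (mk_bounded_subset_le _ c) ?_
      calc max #(auxBU B A) ℵ₀ ^ c ≤ ρ ^ c := power_le_power_right (max_le hBUA hρ0)
        _ = ρ := hρc
    have hG : #{𝒢 : Set (Set (Set X)) | auxGood B c n A 𝒢 ∧ (auxT X 𝒢).Nonempty} ≤ ρ := by
      have hsub : {𝒢 : Set (Set (Set X)) | auxGood B c n A 𝒢 ∧ (auxT X 𝒢).Nonempty} ⊆
          {𝒢 : Set (Set (Set X)) |
            𝒢 ⊆ {𝒲 : Set (Set X) | 𝒲 ⊆ auxBU B A ∧ #𝒲 ≤ c} ∧ #𝒢 ≤ n} :=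
        fun 𝒢 h𝒢 => ⟨fun 𝒲 h𝒲 => h𝒢.1.2 𝒲 h𝒲, h𝒢.1.1⟩
      refine le_trans (mk_le_mk_of_subset hsub) ?_
      refine le_trans (mk_bounded_subset_le _ n) ?_
      calc max #{𝒲 : Set (Set X) | 𝒲 ⊆ auxBU B A ∧ #𝒲 ≤ c} ℵ₀ ^ n ≤ ρ ^ n :=
          power_le_power_right (max_le hP hρ0)
        _ = ρ := hρn
    have hsplit : #(auxF B c n A) ≤ #A +
        #(auxPt '' {𝒢 : Set (Set (Set X)) | auxGood B c n A 𝒢 ∧ (auxT X 𝒢).Nonempty}) := by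
      simp only [auxF]
      exact mk_union_le _ _
    refine hsplit.trans ?_
    calc #A + #(auxPt '' {𝒢 : Set (Set (Set X)) | auxGood B c n A 𝒢 ∧ (auxT X 𝒢).Nonempty})
        ≤ ρ + ρ := add_le_add hA (mk_image_le.trans hG)
      _ = ρ := add_eq_self hρ0
  -- cardinality of the chain
  have hchain_card : ∀ α : Ordinal.{u}, α < (Order.succ μ).ord → #(auxChain B c n α) ≤ ρ := by
    intro α
    induction α using Ordinal.induction with
    | h α IH =>
      intro hα
      rw [auxChain_def]
      apply hFcard
      refine mk_iUnion_Ordinal_le_of_le ?_ hρ0 _ ?_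
      · exact le_trans (Cardinal.lt_ord.1 hα).le hνρ
      · exact fun β hβ => IH β hβ (hβ.trans hα)
  -- the dense set
  set D : Set X := ⋃ β, ⋃ (_ : β < (Order.succ μ).ord), auxChain B c n β with hD_def
  have hDcard : #D ≤ ρ := by
    rw [hD_def]
    refine mk_iUnion_Ordinal_le_of_le ?_ hρ0 _ ?_
    · rw [Cardinal.card_ord]; exact hνρ
    · exact fun β hβ => hchain_card β hβ
  have hchainD : ∀ {β : Ordinal.{u}}, β < (Order.succ μ).ord → auxChain B c n β ⊆ D := by
    intro β hβ
    rw [hD_def]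
    exact Set.subset_iUnion₂ (s := fun β (_ : β < (Order.succ μ).ord) => auxChain B c n β) β hβ
  have hmemD : ∀ {x : X}, x ∈ D → ∃ β, β < (Order.succ μ).ord ∧ x ∈ auxChain B c n β := by
    intro x hx
    rw [hD_def] at hx
    obtain ⟨β, hβ, hxβ⟩ := Set.mem_iUnion₂.1 hx
    exact ⟨β, hβ, hxβ⟩
  -- D is dense
  have hDdense : Dense D := by
    by_contra hnd
    have hGne : ∃ x, x ∉ closure D := by
      by_contra hforall
      push_neg at hforall
      exact hnd hforall
    obtain ⟨x0, hx0⟩ := hGne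
    obtain ⟨𝒱, h𝒱op, h𝒱card, h𝒱ne, h𝒱sub⟩ :=
      hnq ((closure D)ᶜ) isClosed_closure.isOpen_compl ⟨x0, hx0⟩
    set 𝒜 : Set X → Set (Set X) := fun V => {W | W ∈ auxBU B D ∧ W ⊆ (closure V)ᶜ} with h𝒜_def
    have h𝒜mem : ∀ V : Set X, ∀ W ∈ 𝒜 V, IsOpen W ∧ W.Nonempty := by
      intro V W hW
      obtain ⟨x, _, hWx⟩ := mem_auxBU.1 hW.1
      exact (hB1 x).1 W hWx
    have hWex : ∀ V : Set X, ∃ 𝒲, 𝒲 ⊆ 𝒜 V ∧ #𝒲 ≤ c ∧ ⋃₀ (𝒜 V) ⊆ closure (⋃₀ 𝒲) :=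
      fun V => cell_refine c hcell (𝒜 V) (h𝒜mem V)
    choose Wf hWsub hWcard hWdense using hWex
    set 𝒢 : Set (Set (Set X)) := Wf '' 𝒱 with h𝒢_def
    have h𝒢card : #𝒢 ≤ n := mk_image_le.trans h𝒱card
    -- auxT X 𝒢 is nonempty
    have hTne : (auxT X 𝒢).Nonempty := by
      obtain ⟨q, hq⟩ := h𝒱ne
      refine ⟨q, mem_auxT.2 ?_⟩
      rintro 𝒲 ⟨V, hV, rfl⟩ hqcl
      have hqV : q ∈ V := hq V hV
      obtain ⟨y, hyV, W, hWmem, hyW⟩ := mem_closure_iff.1 hqcl V (h𝒱op V hV) hqV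
      exact (hWsub V hWmem).2 hyW (subset_closure hyV)
    -- find a stage bounding all the witnessing families
    have hstex : ∀ i : Σ V : 𝒱, ↥(Wf (V : Set X)), ∃ β, β < (Order.succ μ).ord ∧
        (i.2 : Set X) ∈ auxBU B (auxChain B c n β) := by
      rintro ⟨V, W⟩
      have hW𝒜 : (W : Set X) ∈ 𝒜 (V : Set X) := hWsub (V : Set X) W.2
      obtain ⟨x, hxD, hWx⟩ := mem_auxBU.1 hW𝒜.1
      obtain ⟨β, hβ, hxβ⟩ := hmemD hxD
      exact ⟨β, hβ, mem_auxBU.2 ⟨x, hxβ, hWx⟩⟩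
    choose st hst1 hst2 using hstex
    have hιcard : #(Σ V : 𝒱, ↥(Wf (V : Set X))) < ((Order.succ μ).ord).cof := by
      rw [(isRegular_succ hμ0).cof_eq]
      refine lt_of_le_of_lt ?_ (Order.lt_succ μ)
      rw [mk_sigma]
      calc (Cardinal.sum fun V : 𝒱 => #(Wf (V : Set X)))
          ≤ Cardinal.sum fun _ : 𝒱 => c := Cardinal.sum_le_sum _ _ fun V => hWcard (V : Set X)
        _ = #𝒱 * c := Cardinal.sum_const' _ _
        _ ≤ n * c := mul_le_mul_left h𝒱card c
        _ ≤ μ := by rw [hμ_def, mul_comm]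
    have hα : (⨆ i, st i) < (Order.succ μ).ord := Ordinal.iSup_lt_ord hιcard hst1
    have hGoodα : auxGood B c n (auxChain B c n (⨆ i, st i)) 𝒢 := by
      refine ⟨h𝒢card, ?_⟩
      rintro 𝒲 ⟨V, hV, rfl⟩
      refine ⟨?_, hWcard V⟩
      intro W hW
      have hle : st ⟨⟨V, hV⟩, ⟨W, hW⟩⟩ ≤ ⨆ i, st i :=
        le_ciSup (Ordinal.bddAbove_range st) _
      exact auxBU_mono B (auxChain_mono B c n hle) (hst2 ⟨⟨V, hV⟩, ⟨W, hW⟩⟩)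
    have hsucc : Order.succ (⨆ i, st i) < (Order.succ μ).ord :=
      (Cardinal.isSuccLimit_ord hν0).succ_lt hα
    have hpmem : auxPt 𝒢 ∈ auxChain B c n (Order.succ (⨆ i, st i)) := by
      rw [auxChain_def]
      refine Set.mem_union_right _ ?_
      refine ⟨𝒢, ⟨?_, hTne⟩, rfl⟩
      refine auxGood_mono B c n ?_ hGoodα
      exact Set.subset_iUnion₂
        (s := fun β (_ : β < Order.succ (⨆ i, st i)) => auxChain B c n β) _ (Order.lt_succ _)
    have hpD : auxPt 𝒢 ∈ D := hchainD hsucc hpmem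
    have hpcl : auxPt 𝒢 ∈ closure D := subset_closure hpD
    have hpV : ∃ V ∈ 𝒱, auxPt 𝒢 ∉ closure V := by
      by_contra hcon
      push_neg at hcon
      exact (h𝒱sub (Set.mem_iInter₂.2 hcon)) hpcl
    obtain ⟨V, hV, hpVc⟩ := hpV
    have hpT := auxPt_mem hTne
    have hpcompl : auxPt 𝒢 ∉ closure (⋃₀ Wf V) :=
      mem_auxT.1 hpT (Wf V) ⟨V, hV, rfl⟩
    refine hpcompl ?_
    rw [mem_closure_iff]
    intro O hO hpO
    obtain ⟨W, hWB, hWsub'⟩ := (hB1 (auxPt 𝒢)).2 (O ∩ (closure V)ᶜ)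
      (hO.inter isClosed_closure.isOpen_compl) ⟨hpO, hpVc⟩
    have hW𝒜 : W ∈ 𝒜 V := ⟨mem_auxBU.2 ⟨auxPt 𝒢, hpD, hWB⟩, hWsub'.trans Set.inter_subset_right⟩
    obtain ⟨w, hw⟩ := ((hB1 (auxPt 𝒢)).1 W hWB).2
    have hwcl : w ∈ closure (⋃₀ Wf V) := hWdense V ⟨W, hW𝒜, hw⟩
    have hwO : w ∈ O := (hWsub' hw).1
    exact mem_closure_iff.1 hwcl O hO hwO
  calc dens X ≤ #D := csInf_le' ⟨D, hDdense, rfl⟩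
    _ ≤ ρ := hDcard
end

section
/- If X is a quasiregular space, then d(X) ≤ πχ(X)^(c(X)), i.e., X has a dense subset of cardinality at most πχ(X) raised to the power c(X). -/
open Cardinal Set TopologicalSpace

universe u

section ShapAux

universe v

/-- Codes for the points of the closure construction. -/
inductive SCode (Q K : Type v) : Type v
  | base : SCode Q K
  | node (f : Q → SCode Q K) (k : Q → K) : SCode Q K

noncomputable def SCode.enc {Q K N : Type v} (j : (Q → Option N × K) → N) :
    SCode Q K → Option N
  | .base => none
  | .node f k => some (j fun i => (SCode.enc j (f i), k i))

lemma SCode.enc_inj {Q K N : Type v} (j : (Q → Option N × K) → N)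
    (hj : Function.Injective j) :
    Function.Injective (SCode.enc (Q := Q) (K := K) j) := by
  intro a
  induction a with
  | base =>
    intro b h
    cases b with
    | base => rfl
    | node f k => simp [SCode.enc] at h
  | node f k ih =>
    intro b h
    cases b with
    | base => simp [SCode.enc] at h
    | node f' k' =>
      simp only [SCode.enc, Option.some.injEq] at h
      have h2 := hj h
      have hf : f = f' := funext fun i => ih i (congrArg (fun g => (g i).1) h2)
      have hk : k = k' := funext fun i => congrArg (fun g => (g i).2) h2
      rw [hf, hk]

noncomputable def SCode.decode {Q K X : Type v} (p0 : X) (pick : (Q → Set X) → X)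
    (e : X → K → Set X) : SCode Q K → X
  | .base => p0
  | .node f k => pick fun i => e (SCode.decode p0 pick e (f i)) (k i)

/-- The closure construction: start with `x₀` and close under picking points. -/
inductive Reach (Q : Type v) {X : Type v} (x₀ : X) (𝒱 : X → Set (Set X))
    (pick : (Q → Set X) → X) : X → Prop
  | base : Reach Q x₀ 𝒱 pick x₀
  | step (xs : Q → X) (f : Q → Set X) (hxs : ∀ i, Reach Q x₀ 𝒱 pick (xs i))
      (hf : ∀ i, f i ∈ 𝒱 (xs i)) : Reach Q x₀ 𝒱 pick (pick f)

lemma reach_mem_range_decode {Q K X : Type v} (x₀ : X) (𝒱 : X → Set (Set X))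
    (pick : (Q → Set X) → X) (e : X → K → Set X)
    (he : ∀ x, ∀ S ∈ 𝒱 x, ∃ k, e x k = S) (x : X)
    (hx : Reach Q x₀ 𝒱 pick x) :
    ∃ c : SCode Q K, SCode.decode x₀ pick e c = x := by
  induction hx with
  | base => exact ⟨.base, rfl⟩
  | step xs f hxs hf ih =>
    choose cs hcs using ih
    choose ks hks using fun i => he (xs i) (f i) (hf i)
    refine ⟨.node cs ks, ?_⟩
    show (pick fun i => e (SCode.decode x₀ pick e (cs i)) (ks i)) = pick f
    congr 1
    funext i
    rw [hcs i, hks i]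

/-- From `#s ≤ #β` and `s` nonempty, get an enumeration of `s` indexed by `β`. -/
lemma exists_enum {α β : Type v} (s : Set α) (hs : s.Nonempty) (h : #s ≤ #β) :
    ∃ f : β → α, (∀ i, f i ∈ s) ∧ ∀ a ∈ s, ∃ i, f i = a := by
  classical
  obtain ⟨g⟩ := (Cardinal.le_def _ _).mp h
  refine ⟨fun b => if h : ∃ a : s, g a = b then (h.choose : α) else hs.choose, ?_, ?_⟩
  · intro i
    by_cases h : ∃ a : s, g a = i
    · simp only [dif_pos h]; exact (h.choose).2
    · simp only [dif_neg h]; exact hs.choose_spec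
  · intro a ha
    refine ⟨g ⟨a, ha⟩, ?_⟩
    have h : ∃ b : s, g b = g ⟨a, ha⟩ := ⟨⟨a, ha⟩, rfl⟩
    simp only [dif_pos h]
    have := g.injective h.choose_spec
    rw [this]

end ShapAux

/-- If `X` is quasiregular then `d(X) ≤ πχ(X)^(c(X))`. -/
theorem stmt_4 (X : Type u) [TopologicalSpace X] (hX : Quasiregular X) :
    dens X ≤ piChar X ^ cellularity X := by
  classical
  rcases isEmpty_or_nonempty X with h | hne
  · -- empty space: the empty set is dense
    have hd : Dense (∅ : Set X) := fun x => (IsEmpty.false x).elim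
    have h0 : dens X ≤ 0 :=
      csInf_le (OrderBot.bddBelow _) ⟨∅, hd, by simp⟩
    exact h0.trans zero_le
  -- Notation
  set lam := cellularity X with hlamdef
  set kap := piChar X with hkapdef
  -- cellularity facts
  have hcellS : {κ : Cardinal.{u} | ℵ₀ ≤ κ ∧ ∀ 𝒞 : Set (Set X),
      (∀ U ∈ 𝒞, IsOpen U ∧ U.Nonempty) → 𝒞.PairwiseDisjoint id → #𝒞 ≤ κ}.Nonempty := by
    refine ⟨max ℵ₀ (2 ^ #X), le_max_left _ _, fun 𝒞 _ _ => ?_⟩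
    calc #𝒞 ≤ #(Set X) := Cardinal.mk_set_le _
      _ = 2 ^ #X := Cardinal.mk_set
      _ ≤ _ := le_max_right _ _
  have hcell : lam ∈ {κ : Cardinal.{u} | ℵ₀ ≤ κ ∧ ∀ 𝒞 : Set (Set X),
      (∀ U ∈ 𝒞, IsOpen U ∧ U.Nonempty) → 𝒞.PairwiseDisjoint id → #𝒞 ≤ κ} := by
    rw [hlamdef, cellularity]; exact csInf_mem hcellS
  obtain ⟨hlam0, hcellbound⟩ := hcell
  -- π-character facts
  have hpoint : ∀ x : X, ℵ₀ ≤ piCharPoint X x ∧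
      ∃ 𝒱 : Set (Set X), IsLocalPiBase X x 𝒱 ∧ #𝒱 ≤ kap := by
    intro x
    have hSne : {κ : Cardinal.{u} | ℵ₀ ≤ κ ∧ ∃ 𝒱 : Set (Set X),
        IsLocalPiBase X x 𝒱 ∧ #𝒱 ≤ κ}.Nonempty := by
      refine ⟨max ℵ₀ (2 ^ #X), le_max_left _ _,
        {V : Set X | IsOpen V ∧ V.Nonempty}, ⟨fun V hV => hV, fun U hU hxU =>
          ⟨U, ⟨hU, ⟨x, hxU⟩⟩, subset_rfl⟩⟩, ?_⟩
      calc #{V : Set X | IsOpen V ∧ V.Nonempty} ≤ #(Set X) := Cardinal.mk_set_le _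
        _ = 2 ^ #X := Cardinal.mk_set
        _ ≤ _ := le_max_right _ _
    have hmem := csInf_mem hSne
    have hle : piCharPoint X x ≤ kap := by
      rw [hkapdef, piChar]
      exact le_ciSup (Cardinal.bddAbove_range _) x
    refine ⟨hmem.1, ?_⟩
    obtain ⟨_, 𝒱, h1, h2⟩ := hmem
    exact ⟨𝒱, h1, h2.trans hle⟩
  have hkap0 : ℵ₀ ≤ kap := by
    have h1 := (hpoint hne.some).1
    have hle : piCharPoint X hne.some ≤ kap := by
      rw [hkapdef, piChar]
      exact le_ciSup (Cardinal.bddAbove_range _) _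
    exact h1.trans hle
  choose 𝒱 h𝒱pi h𝒱card using fun x => (hpoint x).2
  have h𝒱ne : ∀ x : X, (𝒱 x).Nonempty := by
    intro x
    obtain ⟨V, hV, -⟩ := (h𝒱pi x).2 Set.univ isOpen_univ (Set.mem_univ x)
    exact ⟨V, hV⟩
  -- arithmetic
  set mu := kap ^ lam with hmudef
  have hone_lam : (1 : Cardinal) ≤ lam := Cardinal.one_le_aleph0.trans hlam0
  have hkapmu : kap ≤ mu := Cardinal.self_le_power kap hone_lam
  have hmu0 : ℵ₀ ≤ mu := hkap0.trans hkapmu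
  have hmupow : mu ^ lam = mu := by
    rw [hmudef, ← Cardinal.power_mul, Cardinal.mul_eq_self hlam0]
  -- index types
  set Q := lam.out with hQdef
  set K := kap.out with hKdef
  set N := mu.out with hNdef
  have hQcard : #Q = lam := Cardinal.mk_out lam
  have hKcard : #K = kap := Cardinal.mk_out kap
  have hNcard : #N = mu := Cardinal.mk_out mu
  -- enumerations of the local π-bases
  have hEnum : ∀ x : X, ∃ e : K → Set X, (∀ k, e k ∈ 𝒱 x) ∧ ∀ S ∈ 𝒱 x, ∃ k, e k = S := by
    intro x
    exact exists_enum (𝒱 x) (h𝒱ne x) (by rw [hKcard]; exact h𝒱card x)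
  choose e he1 he2 using hEnum
  -- the picking function
  have hpickex : ∃ pick : (Q → Set X) → X,
      ∀ f : Q → Set X, ((closure (⋃ i, f i))ᶜ : Set X).Nonempty →
        pick f ∈ ((closure (⋃ i, f i))ᶜ : Set X) := by
    refine ⟨fun f => if h : ((closure (⋃ i, f i))ᶜ : Set X).Nonempty then h.choose
      else hne.some, fun f h => ?_⟩
    simp only [dif_pos h]
    exact h.choose_spec
  obtain ⟨pick, hpick⟩ := hpickex
  set x₀ := hne.some with hx₀def
  set D := {x : X | Reach Q x₀ 𝒱 pick x} with hDdef
  -- cardinality bound for D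
  have hDcard : #D ≤ mu := by
    have harrow : #(Q → Option N × K) ≤ #N := by
      have h1 : #(Q → Option N × K) = ((mu + 1) * kap) ^ lam := by
        rw [← Cardinal.power_def, Cardinal.mk_prod, Cardinal.lift_id, Cardinal.lift_id,
          Cardinal.mk_option, hNcard, hKcard, hQcard]
      rw [h1, hNcard, Cardinal.add_one_eq hmu0,
        Cardinal.mul_eq_max hmu0 hkap0, max_eq_left hkapmu, hmupow]
    obtain ⟨j⟩ := (Cardinal.le_def _ _).mp harrow
    have hcode : #(SCode Q K) ≤ mu := by
      have := Cardinal.mk_le_of_injective (SCode.enc_inj j j.injective)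
      calc #(SCode Q K) ≤ #(Option N) := this
        _ = mu + 1 := by rw [Cardinal.mk_option, hNcard]
        _ = mu := Cardinal.add_one_eq hmu0
    have hsub : D ⊆ Set.range (SCode.decode (Q := Q) (K := K) x₀ pick e) := by
      intro x hx
      obtain ⟨c, hc⟩ := reach_mem_range_decode (K := K) x₀ 𝒱 pick e he2 x hx
      exact ⟨c, hc⟩
    calc #D ≤ #(Set.range (SCode.decode (Q := Q) (K := K) x₀ pick e)) :=
        Cardinal.mk_le_mk_of_subset hsub
      _ ≤ #(SCode Q K) := Cardinal.mk_range_le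
      _ ≤ mu := hcode
  -- density of D
  have hDense : Dense D := by
    by_contra hnd
    have hWne : ((closure D)ᶜ : Set X).Nonempty := by
      rw [Set.nonempty_compl]
      intro hcl
      exact hnd (dense_iff_closure_eq.mpr hcl)
    obtain ⟨V, hVopen, hVne, hVcl⟩ :=
      hX ((closure D)ᶜ) isClosed_closure.isOpen_compl hWne
    -- the family of π-base elements of points of D missing the closure of V
    set 𝒜 := {P : Set X | (∃ x ∈ D, P ∈ 𝒱 x) ∧ P ∩ closure V = ∅} with h𝒜def
    set S := {t : Set (Set X) | t ⊆ 𝒜 ∧ t.PairwiseDisjoint id} with hSdef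
    -- maximal disjoint subfamily by Zorn's lemma
    obtain ⟨𝒢, h𝒢max⟩ : ∃ 𝒢, Maximal (· ∈ S) 𝒢 := by
      apply zorn_subset
      intro c hcS hchain
      refine ⟨⋃₀ c, ⟨?_, ?_⟩, fun s hs => Set.subset_sUnion_of_mem hs⟩
      · exact Set.sUnion_subset fun t ht => (hcS ht).1
      · intro a ha b hb hab
        obtain ⟨t, htc, hat⟩ := ha
        obtain ⟨t', ht'c, hbt'⟩ := hb
        rcases hchain.total htc ht'c with h | h
        · exact (hcS ht'c).2 (h hat) hbt' hab
        · exact (hcS htc).2 hat (h hbt') hab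
    obtain ⟨⟨h𝒢sub, h𝒢pd⟩, h𝒢m⟩ := h𝒢max
    -- elements of 𝒜 are open and nonempty
    have h𝒜open : ∀ P ∈ 𝒜, IsOpen P ∧ P.Nonempty := by
      rintro P ⟨⟨x, -, hPx⟩, -⟩
      exact (h𝒱pi x).1 P hPx
    -- the family has size at most lam
    have h𝒢lam : #𝒢 ≤ lam :=
      hcellbound 𝒢 (fun U hU => h𝒜open U (h𝒢sub hU)) h𝒢pd
    -- a point of D avoiding the closure of the union of 𝒢
    have hdex : ∃ d ∈ D, d ∉ closure (⋃₀ 𝒢) := by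
      rcases eq_empty_or_nonempty 𝒢 with h𝒢e | h𝒢ne
      · refine ⟨x₀, Reach.base, ?_⟩
        rw [h𝒢e, Set.sUnion_empty, closure_empty]
        exact notMem_empty _
      · obtain ⟨f, hf1, hf2⟩ := exists_enum 𝒢 h𝒢ne (by rw [hQcard]; exact h𝒢lam)
        have hUeq : (⋃ i, f i) = ⋃₀ 𝒢 := by
          apply Set.Subset.antisymm
          · exact Set.iUnion_subset fun i => Set.subset_sUnion_of_mem (hf1 i)
          · refine Set.sUnion_subset fun t ht => ?_
            obtain ⟨i, hi⟩ := hf2 t ht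
            rw [← hi]
            exact Set.subset_iUnion f i
        have hxs : ∀ i, ∃ x, x ∈ D ∧ f i ∈ 𝒱 x := fun i => (h𝒢sub (hf1 i)).1
        choose xs hxs1 hxs2 using hxs
        have hreach : pick f ∈ D := Reach.step xs f hxs1 hxs2
        have hGne : ((closure (⋃ i, f i))ᶜ : Set X).Nonempty := by
          obtain ⟨v, hv⟩ := hVne
          refine ⟨v, ?_⟩
          intro hvcl
          rw [hUeq] at hvcl
          rw [mem_closure_iff] at hvcl
          obtain ⟨y, hyV, t, ht𝒢, hyt⟩ := hvcl V hVopen hv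
          have ht𝒜 := h𝒢sub ht𝒢
          have : y ∈ t ∩ closure V := ⟨hyt, subset_closure hyV⟩
          rw [ht𝒜.2] at this
          exact this
        have := hpick f hGne
        rw [hUeq] at this
        exact ⟨pick f, hreach, this⟩
    obtain ⟨d, hdD, hdG⟩ := hdex
    -- d is not in the closure of V
    have hdV : d ∉ closure V := by
      intro hd
      exact hVcl hd (subset_closure hdD)
    -- take a π-base element of d inside the good open set
    have hO : IsOpen ((closure (⋃₀ 𝒢))ᶜ ∩ (closure V)ᶜ : Set X) :=
      IsOpen.inter isClosed_closure.isOpen_compl isClosed_closure.isOpen_compl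
    have hdO : d ∈ ((closure (⋃₀ 𝒢))ᶜ ∩ (closure V)ᶜ : Set X) := ⟨hdG, hdV⟩
    obtain ⟨P, hP𝒱, hPsub⟩ := (h𝒱pi d).2 _ hO hdO
    have hPopenne := (h𝒱pi d).1 P hP𝒱
    have hP𝒜 : P ∈ 𝒜 := by
      refine ⟨⟨d, hdD, hP𝒱⟩, ?_⟩
      apply Set.eq_empty_iff_forall_notMem.mpr
      rintro y ⟨hyP, hyV⟩
      exact (hPsub hyP).2 hyV
    -- the extended family contradicts maximality
    have hins : insert P 𝒢 ∈ S := by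
      refine ⟨Set.insert_subset_iff.mpr ⟨hP𝒜, h𝒢sub⟩, ?_⟩
      refine h𝒢pd.insert fun t ht htne => ?_
      refine Set.disjoint_left.mpr fun a haP hat => ?_
      have h1 : a ∈ (closure (⋃₀ 𝒢))ᶜ := (hPsub haP).1
      exact h1 (subset_closure (Set.mem_sUnion.mpr ⟨t, ht, hat⟩))
    have hP𝒢 : P ∈ 𝒢 := by
      have := h𝒢m hins (Set.subset_insert P 𝒢)
      exact this (Set.mem_insert P 𝒢)
    obtain ⟨p, hp⟩ := hPopenne.2
    have hp1 : p ∈ (closure (⋃₀ 𝒢))ᶜ := (hPsub hp).1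
    exact hp1 (subset_closure (Set.mem_sUnion.mpr ⟨P, hP𝒢, hp⟩))
  -- conclude
  have hfin : dens X ≤ #D :=
    csInf_le (OrderBot.bddBelow _) ⟨D, hDense, rfl⟩
  exact hfin.trans hDcard
end

section
/- If X is a regular space, then d(X) ≤ πχ(X)^(c(X)). -/
open Cardinal Set TopologicalSpace

universe u

section SapirovskiiAux

open Cardinal Set Ordinal

/-- Transfinite iteration of a set operator along `o.ToType`. -/
noncomputable def sapChain {α : Type u} (o : Ordinal.{u}) (S : Set α → Set α) :
    o.ToType → Set α :=
  fun i => S (⋃ j : {j : o.ToType // j < i}, sapChain o S j.1)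
termination_by i => i
decreasing_by exact j.2

theorem sapChain_eq {α : Type u} (o : Ordinal.{u}) (S : Set α → Set α) (i : o.ToType) :
    sapChain o S i = S (⋃ j : {j : o.ToType // j < i}, sapChain o S j.1) := by
  conv_lhs => rw [sapChain]

theorem mk_iUnion_le'' {α ι : Type u} (f : ι → Set α) (c : Cardinal.{u})
    (h : ∀ i, #(f i) ≤ c) : #(⋃ i, f i) ≤ #ι * c :=
  (Cardinal.mk_iUnion_le_sum_mk.trans (Cardinal.sum_le_sum _ _ h)).trans_eq
    (Cardinal.sum_const' _ _)

end SapirovskiiAux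

open Topology

/-- If `X` is regular then `d(X) ≤ πχ(X)^(c(X))`. -/
theorem stmt_5 (X : Type u) [TopologicalSpace X] [RegularSpace X] :
    dens X ≤ piChar X ^ cellularity X := by
  classical
  rcases isEmpty_or_nonempty X with h | hne
  · have hd : Dense (∅ : Set X) := fun x => (h.false x).elim
    have : dens X ≤ 0 := csInf_le' ⟨(∅ : Set X), hd, by simp⟩
    exact this.trans zero_le
  -- basic data
  set κ := piChar X with hκdef
  set lam := cellularity X with hlamdef
  have hcell_mem : lam ∈ {κ' : Cardinal.{u} | ℵ₀ ≤ κ' ∧ ∀ 𝒞 : Set (Set X),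
      (∀ U ∈ 𝒞, IsOpen U ∧ U.Nonempty) → 𝒞.PairwiseDisjoint id → #𝒞 ≤ κ'} := by
    apply csInf_mem
    refine ⟨max (2 ^ #X) ℵ₀, le_max_right _ _, fun 𝒞 _ _ => ?_⟩
    calc #𝒞 ≤ #(Set X) := mk_set_le _
      _ = 2 ^ #X := mk_set
      _ ≤ _ := le_max_left _ _
  obtain ⟨hlamℵ, hcell⟩ := hcell_mem
  have hPx : ∀ x : X, piCharPoint X x ∈ {κ' : Cardinal.{u} | ℵ₀ ≤ κ' ∧
      ∃ 𝒱 : Set (Set X), IsLocalPiBase X x 𝒱 ∧ #𝒱 ≤ κ'} := by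
    intro x
    apply csInf_mem
    refine ⟨max (2 ^ #X) ℵ₀, le_max_right _ _, {V | IsOpen V ∧ V.Nonempty},
      ⟨fun V hV => hV, fun U hU hxU => ⟨U, ⟨hU, ⟨x, hxU⟩⟩, subset_rfl⟩⟩, ?_⟩
    calc #{V : Set X | IsOpen V ∧ V.Nonempty} ≤ #(Set X) := mk_set_le _
      _ = 2 ^ #X := mk_set
      _ ≤ _ := le_max_left _ _
  have hbase : ∀ x : X, ∃ 𝒱 : Set (Set X), IsLocalPiBase X x 𝒱 ∧ #𝒱 ≤ κ := by
    intro x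
    obtain ⟨-, 𝒱, h1, h2⟩ := hPx x
    exact ⟨𝒱, h1, h2.trans (le_ciSup (Cardinal.bddAbove_range _) x)⟩
  choose V hVpb hVκ using hbase
  have hκℵ : ℵ₀ ≤ κ := by
    obtain ⟨x⟩ := hne
    exact (hPx x).1.trans (le_ciSup (Cardinal.bddAbove_range _) x)
  set μ := κ ^ lam with hμdef
  have h2κ : (2 : Cardinal) ≤ κ := le_trans (by simpa using (nat_lt_aleph0 2).le) hκℵ
  have hκμ : κ ≤ μ := self_le_power κ (one_le_aleph0.trans hlamℵ)
  have hμℵ : ℵ₀ ≤ μ := hκℵ.trans hκμ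
  have hsuccμ : Order.succ lam ≤ μ :=
    (Order.succ_le_of_lt (cantor lam)).trans (power_le_power_right h2κ)
  have hμlam : μ ^ lam = μ := by rw [hμdef, ← power_mul, mul_eq_self hlamℵ]
  have hμμ : μ * μ = μ := mul_eq_self hμℵ
  -- choice of points avoiding closures
  have hwex : ∀ 𝒲 : Set (Set X), ∃ y : X,
      (closure (⋃₀ 𝒲))ᶜ.Nonempty → y ∉ closure (⋃₀ 𝒲) := by
    intro 𝒲
    by_cases h : (closure (⋃₀ 𝒲))ᶜ.Nonempty
    · exact ⟨h.choose, fun _ => h.choose_spec⟩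
    · exact ⟨Classical.arbitrary X, fun h' => absurd h' h⟩
  choose w hw using hwex
  set VB : Set X → Set (Set X) := fun B => ⋃ a ∈ B, V a with hVBdef
  set Sop : Set X → Set X := fun B => B ∪ w '' {𝒲 | 𝒲 ⊆ VB B ∧ #𝒲 ≤ lam} with hSdef
  set o := (Order.succ lam).ord with hodef
  set A : o.ToType → Set X := sapChain o Sop with hAdef
  set Astar := ⋃ i, A i with hAstardef
  have hAeq : ∀ i, A i = Sop (⋃ j : {j : o.ToType // j < i}, A j.1) :=
    fun i => sapChain_eq o Sop i
  have hVBcard : ∀ B : Set X, #B ≤ μ → #(VB B) ≤ μ := by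
    intro B hB
    have he : VB B = ⋃ a : B, V a.1 := by
      simp only [hVBdef]; exact biUnion_eq_iUnion _ _
    calc #(VB B) ≤ #B * κ := by
          rw [he]; exact mk_iUnion_le'' _ _ (fun a => hVκ a.1)
      _ ≤ μ * μ := mul_le_mul' hB hκμ
      _ = μ := hμμ
  have hScard : ∀ B : Set X, #B ≤ μ → #(Sop B) ≤ μ := by
    intro B hB
    have h1 : #(w '' {𝒲 | 𝒲 ⊆ VB B ∧ #𝒲 ≤ lam}) ≤ μ := by
      refine le_trans mk_image_le ?_
      have h2 : #{𝒲 : Set (Set X) | 𝒲 ⊆ VB B ∧ #𝒲 ≤ lam} ≤ max #(VB B) ℵ₀ ^ lam :=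
        mk_bounded_subset_le (VB B) lam
      refine h2.trans ?_
      calc max #(VB B) ℵ₀ ^ lam ≤ μ ^ lam :=
            power_le_power_right (max_le (hVBcard B hB) hμℵ)
        _ = μ := hμlam
    calc #(Sop B) ≤ #B + _ := mk_union_le _ _
      _ ≤ μ + μ := add_le_add hB h1
      _ = μ := by rw [add_eq_self hμℵ]
  have hιcard : #o.ToType = Order.succ lam := by rw [mk_toType, hodef, card_ord]
  have hAcard : ∀ i, #(A i) ≤ μ := by
    intro i
    induction i using WellFoundedLT.induction with
    | ind i ih =>
      rw [hAeq i]
      apply hScard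
      refine le_trans (mk_iUnion_le'' _ μ (fun j => ih j.1 j.2)) ?_
      calc #{j : o.ToType // j < i} * μ ≤ #o.ToType * μ :=
            mul_le_mul' (mk_subtype_le _) le_rfl
        _ ≤ μ * μ := by rw [hιcard]; exact mul_le_mul' hsuccμ le_rfl
        _ = μ := hμμ
  have hAsub : ∀ i, A i ⊆ Astar := fun i => subset_iUnion A i
  have hAstarcard : #Astar ≤ μ := by
    refine le_trans (mk_iUnion_le'' A μ hAcard) ?_
    rw [hιcard]
    calc Order.succ lam * μ ≤ μ * μ := mul_le_mul' hsuccμ le_rfl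
      _ = μ := hμμ
  -- capture: any small subfamily of the π-bases of points of `Astar` appears at some stage
  have hcapture : ∀ 𝒲 : Set (Set X), 𝒲 ⊆ VB Astar → #𝒲 ≤ lam →
      ∃ i, 𝒲 ⊆ VB (⋃ j : {j : o.ToType // j < i}, A j.1) := by
    intro 𝒲 hsub hcard
    have hex : ∀ W : 𝒲, ∃ i : o.ToType, ∃ a, a ∈ A i ∧ W.1 ∈ V a := by
      intro W
      have h1 : W.1 ∈ ⋃ a ∈ Astar, V a := hsub W.2
      obtain ⟨a, ha, hWa⟩ := mem_iUnion₂.mp h1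
      obtain ⟨i, hi⟩ := mem_iUnion.mp ha
      exact ⟨i, a, hi, hWa⟩
    choose f a haf hWa using hex
    haveI : IsWellOrder o.ToType (· < ·) := ⟨⟩
    have hbdd : Set.Bounded (· < ·) (Set.range f) := by
      by_contra hnb
      have hcf : IsCofinal (Set.range f) := by
        intro c
        by_contra hc
        push_neg at hc
        exact hnb ⟨c, fun b hb => hc b hb⟩
      have hcof : o.cof = Order.succ lam := by
        rw [hodef]; exact (isRegular_succ hlamℵ).cof_eq
      have hle := Order.cof_le hcf
      rw [Ordinal.cof_toType, hcof] at hle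
      exact absurd (hle.trans (mk_range_le.trans hcard)) (not_le.mpr (Order.lt_succ lam))
    obtain ⟨b, hb⟩ := hbdd
    refine ⟨b, fun W hW => ?_⟩
    have hfb : f ⟨W, hW⟩ < b := hb _ (Set.mem_range_self _)
    have haA : a ⟨W, hW⟩ ∈ ⋃ j : {j : o.ToType // j < b}, A j.1 :=
      mem_iUnion.mpr ⟨⟨f ⟨W, hW⟩, hfb⟩, haf ⟨W, hW⟩⟩
    exact mem_biUnion haA (hWa ⟨W, hW⟩)
  -- Astar is dense
  have hdense : Dense Astar := by
    by_contra hnd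
    obtain ⟨x, hx⟩ := not_forall.mp hnd
    have hmem : (closure Astar)ᶜ ∈ 𝓝 x :=
      (isOpen_compl_iff.mpr isClosed_closure).mem_nhds hx
    obtain ⟨t, htx, htc, hts⟩ := exists_mem_nhds_isClosed_subset hmem
    set U := interior t with hUdef
    have hUopen : IsOpen U := isOpen_interior
    have hxU : x ∈ U := mem_interior_iff_mem_nhds.mpr htx
    have hclU : closure U ⊆ (closure Astar)ᶜ :=
      (closure_minimal interior_subset htc).trans hts
    set P := {𝒲 : Set (Set X) | (∀ Q ∈ 𝒲, Q ∈ VB Astar ∧ Q ∩ U = ∅) ∧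
      𝒲.PairwiseDisjoint id} with hPdef
    obtain ⟨𝒲, h𝒲max⟩ := zorn_subset P (by
      intro c hc hchain
      refine ⟨⋃₀ c, ⟨?_, ?_⟩, fun s hs => subset_sUnion_of_mem hs⟩
      · rintro Q ⟨𝒲', h𝒲', hQ⟩
        exact (hc h𝒲').1 Q hQ
      · rintro Q ⟨𝒲₁, h𝒲₁, hQ₁⟩ Q' ⟨𝒲₂, h𝒲₂, hQ₂⟩ hne'
        rcases hchain.total h𝒲₁ h𝒲₂ with h | h
        · exact (hc h𝒲₂).2 (h hQ₁) hQ₂ hne'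
        · exact (hc h𝒲₁).2 hQ₁ (h hQ₂) hne')
    obtain ⟨h𝒲D, h𝒲dis⟩ := h𝒲max.prop
    have h𝒲open : ∀ Q ∈ 𝒲, IsOpen Q ∧ Q.Nonempty := by
      intro Q hQ
      have h1 : Q ∈ ⋃ a ∈ Astar, V a := (h𝒲D Q hQ).1
      obtain ⟨a, -, hQa⟩ := mem_iUnion₂.mp h1
      exact (hVpb a).1 Q hQa
    have h𝒲lam : #𝒲 ≤ lam := hcell 𝒲 h𝒲open h𝒲dis
    obtain ⟨i, hi⟩ := hcapture 𝒲 (fun Q hQ => (h𝒲D Q hQ).1) h𝒲lam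
    have hxW : x ∉ closure (⋃₀ 𝒲) := by
      intro hxcl
      obtain ⟨z, hzU, Q, hQ, hzQ⟩ := mem_closure_iff.mp hxcl U hUopen hxU
      have : z ∈ Q ∩ U := ⟨hzQ, hzU⟩
      rw [(h𝒲D Q hQ).2] at this
      exact this
    have hne' : (closure (⋃₀ 𝒲))ᶜ.Nonempty := ⟨x, hxW⟩
    -- the witness added at stage i
    set y := w 𝒲 with hydef
    have hyA : y ∈ A i := by
      rw [hAeq i]
      exact Or.inr ⟨𝒲, ⟨hi, h𝒲lam⟩, rfl⟩
    have hy_not : y ∉ closure (⋃₀ 𝒲) := hw 𝒲 hne'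
    have hyAstar : y ∈ Astar := hAsub i hyA
    have hyclU : y ∉ closure U := fun h => (hclU h) (subset_closure hyAstar)
    set N := (closure (⋃₀ 𝒲))ᶜ ∩ (closure U)ᶜ with hNdef
    have hNopen : IsOpen N :=
      (isClosed_closure.isOpen_compl).inter (isClosed_closure.isOpen_compl)
    have hyN : y ∈ N := ⟨hy_not, hyclU⟩
    obtain ⟨Q, hQV, hQN⟩ := (hVpb y).2 N hNopen hyN
    obtain ⟨hQopen, hQne⟩ := (hVpb y).1 Q hQV
    have hQVB : Q ∈ VB Astar := mem_biUnion hyAstar hQV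
    have hQU : Q ∩ U = ∅ := by
      apply eq_empty_iff_forall_notMem.mpr
      rintro z ⟨hzQ, hzU⟩
      exact (hQN hzQ).2 (subset_closure hzU)
    have hQdis : ∀ W ∈ 𝒲, Disjoint Q W := by
      intro W hW
      rw [Set.disjoint_left]
      intro z hzQ hzW
      exact (hQN hzQ).1 (subset_closure ⟨W, hW, hzW⟩)
    have hQnotin : Q ∉ 𝒲 := by
      intro h
      obtain ⟨z, hz⟩ := hQne
      exact Set.disjoint_left.mp (hQdis Q h) hz hz
    have hins : insert Q 𝒲 ∈ P := by
      constructor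
      · rintro Q' hQ'
        rcases hQ' with rfl | hQ'
        · exact ⟨hQVB, hQU⟩
        · exact h𝒲D Q' hQ'
      · exact Set.pairwiseDisjoint_insert.mpr ⟨h𝒲dis, fun W hW _ => hQdis W hW⟩
    exact hQnotin (h𝒲max.2 hins (subset_insert Q 𝒲) (mem_insert Q 𝒲))
  calc dens X ≤ #Astar := csInf_le' ⟨Astar, hdense, rfl⟩
    _ ≤ μ := hAstarcard
end

section
/- If X is a Hausdorff space, then d(X) ≤ πχ(X)^(c(X)·dψ_c(X)). -/
open Cardinal Set TopologicalSpace

universe u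

/-- In a Hausdorff space, the intersection of the closures of all open
neighborhoods of a point is the singleton of that point. -/
theorem aux_t2_inter {X : Type u} [TopologicalSpace X] [T2Space X] (x : X) :
    ⋂ V ∈ {V : Set X | IsOpen V ∧ x ∈ V}, closure V = {x} := by
  apply subset_antisymm
  · intro y hy
    simp only [mem_iInter, mem_setOf_eq] at hy
    rw [mem_singleton_iff]
    by_contra hne
    obtain ⟨U, V, hU, hV, hxU, hyV, hUV⟩ := t2_separation (Ne.symm hne)
    have hyc : y ∈ closure U := hy U ⟨hU, hxU⟩
    rw [mem_closure_iff] at hyc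
    obtain ⟨z, hzV, hzU⟩ := hyc V hV hyV
    exact (hUV.le_bot ⟨hzU, hzV⟩)
  · intro y hy
    rw [mem_singleton_iff] at hy
    subst hy
    simp only [mem_iInter, mem_setOf_eq]
    exact fun V hV => subset_closure hV.2

/-- Enumeration of a small set by a type, with a default padding element. -/
theorem aux_exists_enum {α : Type u} (K : Type u) (s : Set α) (h : #s ≤ #K) (a₀ : α) :
    ∃ f : K → α, (∀ k, f k ∈ insert a₀ s) ∧ ∀ x ∈ s, ∃ k, f k = x := by
  rcases s.eq_empty_or_nonempty with rfl | hs
  · exact ⟨fun _ => a₀, fun _ => mem_insert _ _, by simp⟩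
  · have : Nonempty ↥s := hs.to_subtype
    obtain ⟨emb⟩ := (Cardinal.le_def _ _).1 h
    have hsurj : Function.Surjective (Function.invFun emb) :=
      Function.invFun_surjective emb.injective
    refine ⟨fun k => ((Function.invFun emb k : ↥s) : α), fun k => ?_, fun x hx => ?_⟩
    · exact mem_insert_of_mem _ (Function.invFun emb k).2
    · obtain ⟨k, hk⟩ := hsurj ⟨x, hx⟩
      exact ⟨k, by simp [hk]⟩

/-- Cellularity refinement: any family of nonempty open sets has a subfamily of
size at most the cellularity whose union is dense in the union of the family. -/
theorem aux_cell_refine {X : Type u} [TopologicalSpace X] (κ : Cardinal.{u})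
    (hc : ∀ 𝒞 : Set (Set X), (∀ U ∈ 𝒞, IsOpen U ∧ U.Nonempty) →
      𝒞.PairwiseDisjoint id → #𝒞 ≤ κ)
    (ℋ : Set (Set X)) (hH : ∀ b ∈ ℋ, IsOpen b ∧ b.Nonempty) :
    ∃ 𝒱 ⊆ ℋ, #𝒱 ≤ κ ∧ ⋃₀ ℋ ⊆ closure (⋃₀ 𝒱) := by
  classical
  set S : Set (Set (Set X)) :=
    {𝒞 | (∀ C ∈ 𝒞, IsOpen C ∧ C.Nonempty ∧ ∃ H ∈ ℋ, C ⊆ H) ∧ 𝒞.PairwiseDisjoint id} with hS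
  obtain ⟨𝒞, h𝒞, hmax⟩ : ∃ m, Maximal (· ∈ S) m := by
    apply zorn_subset
    intro c hcS hchain
    refine ⟨⋃₀ c, ⟨?_, ?_⟩, fun s hs => subset_sUnion_of_mem hs⟩
    · rintro C ⟨𝒞₁, h𝒞₁, hC⟩
      exact (hcS h𝒞₁).1 C hC
    · intro C₁ hC₁ C₂ hC₂ hne
      obtain ⟨𝒟₁, h𝒟₁, hC₁'⟩ := hC₁
      obtain ⟨𝒟₂, h𝒟₂, hC₂'⟩ := hC₂
      rcases eq_or_ne 𝒟₁ 𝒟₂ with rfl | hD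
      · exact (hcS h𝒟₁).2 hC₁' hC₂' hne
      · rcases hchain h𝒟₁ h𝒟₂ hD with h | h
        · exact (hcS h𝒟₂).2 (h hC₁') hC₂' hne
        · exact (hcS h𝒟₁).2 hC₁' (h hC₂') hne
  -- choose containing members of ℋ
  have hch : ∀ C ∈ 𝒞, ∃ H ∈ ℋ, C ⊆ H := fun C hC => (h𝒞.1 C hC).2.2
  choose! f hf1 hf2 using hch
  refine ⟨f '' 𝒞, ?_, ?_, ?_⟩
  · rintro H ⟨C, hC, rfl⟩
    exact hf1 C hC
  · exact le_trans Cardinal.mk_image_le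
      (hc 𝒞 (fun U hU => ⟨(h𝒞.1 U hU).1, (h𝒞.1 U hU).2.1⟩) h𝒞.2)
  · have hsub : ⋃₀ 𝒞 ⊆ ⋃₀ (f '' 𝒞) := by
      rintro z ⟨C, hC, hz⟩
      exact ⟨f C, ⟨C, hC, rfl⟩, hf2 C hC hz⟩
    refine fun x hx => closure_mono hsub ?_
    obtain ⟨H, hHℋ, hxH⟩ := hx
    rw [mem_closure_iff]
    intro N hN hxN
    by_contra hempty
    rw [not_nonempty_iff_eq_empty] at hempty
    have hxNH : x ∈ N ∩ H := ⟨hxN, hxH⟩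
    have hins : insert (N ∩ H) 𝒞 ∈ S := by
      constructor
      · rintro C (rfl | hC)
        · exact ⟨hN.inter (hH H hHℋ).1, ⟨x, hxNH⟩, ⟨H, hHℋ, inter_subset_right⟩⟩
        · exact h𝒞.1 C hC
      · rw [Set.pairwiseDisjoint_insert]
        refine ⟨h𝒞.2, fun j hj _ => ?_⟩
        rw [Set.disjoint_left]
        intro z hz1 hz2
        have : z ∈ N ∩ ⋃₀ 𝒞 := ⟨hz1.1, ⟨j, hj, hz2⟩⟩
        rw [hempty] at this
        exact this
    have hmem : (N ∩ H) ∈ 𝒞 := hmax hins (subset_insert _ _) (mem_insert _ _)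
    have : x ∈ N ∩ ⋃₀ 𝒞 := ⟨hxN, ⟨N ∩ H, hmem, hxNH⟩⟩
    rw [hempty] at this
    exact this



namespace Stmt6Aux

variable {X : Type u}

/-- The pool of sets available over a stage `S`: π-base elements of points of `S`,
together with the empty set as padding. -/
def PB (B : X → Set (Set X)) (S : Set X) : Set (Set X) := (⋃ a ∈ S, B a) ∪ {∅}

/-- Validity of a κ×κ-matrix of sets over a stage. -/
def Valid {K : Type u} (B : X → Set (Set X)) (S : Set X) (g : K → K → Set X) : Prop :=
  ∀ i j, g i j ∈ PB B S

/-- One closing-off step. -/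
noncomputable def step {K : Type u} (B : X → Set (Set X)) (w : (K → K → Set X) → X)
    (S : Set X) : Set X :=
  S ∪ (w '' {g | Valid B S g})

/-- The transfinite closing-off iteration. -/
noncomputable def FF {K : Type u} (x₀ : X) (B : X → Set (Set X)) (w : (K → K → Set X) → X) :
    Ordinal.{u} → Set X :=
  Ordinal.lt_wf.fix (C := fun _ => Set X)
    (fun o ih => insert x₀ (⋃ p : Iio o, step B w (ih p p.2)))

theorem FF_eq {K : Type u} (x₀ : X) (B : X → Set (Set X)) (w : (K → K → Set X) → X)
    (o : Ordinal.{u}) :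
    FF x₀ B w o = insert x₀ (⋃ p : Iio o, step B w (FF x₀ B w ↑p)) :=
  WellFounded.fix_eq _ _ _

theorem mem_FF {K : Type u} (x₀ : X) (B : X → Set (Set X)) (w : (K → K → Set X) → X)
    (o : Ordinal.{u}) : x₀ ∈ FF x₀ B w o := by
  rw [FF_eq]; exact mem_insert _ _

theorem FF_mono {K : Type u} (x₀ : X) (B : X → Set (Set X)) (w : (K → K → Set X) → X)
    {o o' : Ordinal.{u}} (h : o' ≤ o) : FF x₀ B w o' ⊆ FF x₀ B w o := by
  rw [FF_eq x₀ B w o', FF_eq x₀ B w o]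
  apply insert_subset_insert
  exact iUnion_subset fun p =>
    subset_iUnion_of_subset (⟨(p : Ordinal.{u}), lt_of_lt_of_le p.2 h⟩ : Iio o) subset_rfl

theorem step_sub {K : Type u} (x₀ : X) (B : X → Set (Set X)) (w : (K → K → Set X) → X)
    {o o' : Ordinal.{u}} (h : o' < o) : step B w (FF x₀ B w o') ⊆ FF x₀ B w o := by
  rw [FF_eq x₀ B w o]
  exact subset_trans
    (subset_iUnion (fun p : Iio o => step B w (FF x₀ B w ↑p)) ⟨o', h⟩) (subset_insert _ _)

theorem PB_mono (B : X → Set (Set X)) {S T : Set X} (h : S ⊆ T) : PB B S ⊆ PB B T := by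
  rintro b (hb | hb)
  · obtain ⟨a, ha, hab⟩ := mem_iUnion₂.1 hb
    exact Or.inl (mem_iUnion₂.2 ⟨a, h ha, hab⟩)
  · exact Or.inr hb

theorem card_FF (x₀ : X) (B : X → Set (Set X)) (κ π : Cardinal.{u})
    (hκ : ℵ₀ ≤ κ) (hπ : ℵ₀ ≤ π) (hB : ∀ x, #(B x) ≤ π)
    (w : (κ.out → κ.out → Set X) → X) :
    ∀ o : Ordinal.{u}, o ≤ (Order.succ κ).ord → #(FF x₀ B w o) ≤ π ^ κ := by
  have hπ0 : π ≠ 0 := (aleph0_pos.trans_le hπ).ne'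
  have hπμ : π ≤ π ^ κ := by
    conv_lhs => rw [← power_one π]
    exact power_le_power_left hπ0 (one_le_aleph0.trans hκ)
  have hμinf : ℵ₀ ≤ π ^ κ := hπ.trans hπμ
  have hμμ : π ^ κ * π ^ κ = π ^ κ := mul_eq_self hμinf
  have hκκ : κ * κ = κ := mul_eq_self hκ
  have hμκ : (π ^ κ) ^ κ = π ^ κ := by rw [← power_mul, hκκ]
  have hstep : ∀ S : Set X, #S ≤ π ^ κ → #(step B w S) ≤ π ^ κ := by
    intro S hS
    have hPB : #(PB B S) ≤ π ^ κ := by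
      have h1 : #(⋃ a ∈ S, B a) ≤ π ^ κ := by
        refine le_trans (Cardinal.mk_biUnion_le _ _) ?_
        refine le_trans (mul_le_mul' hS (ciSup_le' fun a => hB _)) ?_
        exact le_trans (mul_le_mul' le_rfl hπμ) hμμ.le
      refine le_trans (Cardinal.mk_union_le _ _) ?_
      refine le_trans (add_le_add h1 (Cardinal.mk_singleton _).le) ?_
      calc π ^ κ + 1 ≤ π ^ κ + π ^ κ := add_le_add le_rfl (one_le_aleph0.trans hμinf)
        _ = π ^ κ := add_eq_self hμinf
    have hg : #{g : κ.out → κ.out → Set X | Valid B S g} ≤ π ^ κ := by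
      have hinj : #{g : κ.out → κ.out → Set X | Valid B S g}
          ≤ #(κ.out → κ.out → ↥(PB B S)) := by
        refine Cardinal.mk_le_of_injective
          (f := fun g => fun i j => (⟨g.1 i j, g.2 i j⟩ : ↥(PB B S))) ?_
        intro g1 g2 h
        apply Subtype.ext
        funext i j
        exact congrArg Subtype.val (congrFun (congrFun h i) j)
      have harr : #(κ.out → κ.out → ↥(PB B S)) = (#↥(PB B S) ^ κ) ^ κ := by
        conv_rhs => rw [← Cardinal.mk_out κ]
        rw [Cardinal.power_def, Cardinal.power_def]
      refine le_trans hinj ?_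
      rw [harr]
      calc (#↥(PB B S) ^ κ) ^ κ ≤ ((π ^ κ) ^ κ) ^ κ :=
            power_le_power_right (power_le_power_right hPB)
        _ = π ^ κ := by rw [hμκ, hμκ]
    refine le_trans (Cardinal.mk_union_le _ _) ?_
    refine le_trans (add_le_add hS (le_trans Cardinal.mk_image_le hg)) ?_
    exact (add_eq_self hμinf).le
  intro o
  induction o using Ordinal.induction with
  | _ o IH =>
    intro ho
    rw [FF_eq]
    refine le_trans Cardinal.mk_insert_le ?_
    have hU : (⋃ p : Iio o, step B w (FF x₀ B w ↑p))
        = ⋃ q : o.ToType, step B w (FF x₀ B w ↑((Ordinal.ToType.mk (o := o)).symm q)) :=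
      ((Ordinal.ToType.mk (o := o)).symm.surjective.iUnion_comp
        (g := fun p : Iio o => step B w (FF x₀ B w ↑p))).symm
    rw [hU]
    have hcard : #(⋃ q : o.ToType, step B w (FF x₀ B w ↑((Ordinal.ToType.mk (o := o)).symm q)))
        ≤ π ^ κ := by
      refine le_trans (Cardinal.mk_iUnion_le _) ?_
      have h1 : #o.ToType ≤ π ^ κ := by
        rw [Cardinal.mk_toType]
        calc o.card ≤ ((Order.succ κ).ord).card := Ordinal.card_le_card ho
          _ = Order.succ κ := Cardinal.card_ord _
          _ ≤ 2 ^ κ := Order.succ_le_of_lt (Cardinal.cantor κ)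
          _ ≤ π ^ κ := power_le_power_right ((Cardinal.nat_lt_aleph0 2).le.trans hπ)
      have h2 : (⨆ q : o.ToType, #(step B w (FF x₀ B w ↑((Ordinal.ToType.mk (o := o)).symm q))))
          ≤ π ^ κ := by
        refine ciSup_le' fun q => ?_
        have hp := ((Ordinal.ToType.mk (o := o)).symm q).2
        exact hstep _ (IH _ hp ((le_of_lt hp).trans ho))
      exact le_trans (mul_le_mul' h1 h2) hμμ.le
    calc #(⋃ q : o.ToType, step B w (FF x₀ B w ↑((Ordinal.ToType.mk (o := o)).symm q))) + 1
        ≤ π ^ κ + π ^ κ := add_le_add hcard (one_le_aleph0.trans hμinf)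
      _ = π ^ κ := add_eq_self hμinf

theorem closure_FF (x₀ : X) (B : X → Set (Set X)) (κ : Cardinal.{u}) (hκ : ℵ₀ ≤ κ)
    (w : (κ.out → κ.out → Set X) → X)
    (g : κ.out → κ.out → Set X)
    (hg : Valid B (FF x₀ B w (Order.succ κ).ord) g) :
    w g ∈ FF x₀ B w (Order.succ κ).ord := by
  have hlim : Order.IsSuccLimit ((Order.succ κ).ord) := Cardinal.isSuccLimit_ord (hκ.trans (Order.lt_succ κ).le)
  have hbdd : ∀ i j, ∃ o, o < (Order.succ κ).ord ∧ g i j ∈ PB B (FF x₀ B w o) := by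
    intro i j
    rcases hg i j with h | h
    · obtain ⟨a, ha, hmem⟩ := mem_iUnion₂.1 h
      rw [FF_eq] at ha
      rcases ha with rfl | ha
      · exact ⟨0, hlim.pos, Or.inl (mem_iUnion₂.2 ⟨a, mem_FF a B w 0, hmem⟩)⟩
      · obtain ⟨p, hp⟩ := mem_iUnion.1 ha
        refine ⟨Order.succ (p : Ordinal.{u}), hlim.succ_lt p.2,
          Or.inl (mem_iUnion₂.2 ⟨a, ?_, hmem⟩)⟩
        exact step_sub x₀ B w (Order.lt_succ _) hp
    · exact ⟨0, hlim.pos, Or.inr h⟩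
  choose o ho1 ho2 using hbdd
  have hOlt : (⨆ pr : κ.out × κ.out, o pr.1 pr.2) < (Order.succ κ).ord := by
    refine Ordinal.iSup_lt_ord ?_ fun pr => ho1 pr.1 pr.2
    rw [(Cardinal.isRegular_succ hκ).cof_eq]
    have hKK : #(κ.out × κ.out) = κ := by
      simp [Cardinal.mk_out, mul_eq_self hκ]
    rw [hKK]
    exact Order.lt_succ κ
  have hvalid : Valid B (FF x₀ B w (⨆ pr : κ.out × κ.out, o pr.1 pr.2)) g := by
    intro i j
    have hle : o i j ≤ ⨆ pr : κ.out × κ.out, o pr.1 pr.2 :=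
      Ordinal.le_iSup (fun pr : κ.out × κ.out => o pr.1 pr.2) (i, j)
    exact PB_mono B (FF_mono x₀ B w hle) (ho2 i j)
  exact step_sub x₀ B w hOlt (Or.inr (mem_image_of_mem w hvalid))

end Stmt6Aux

/-- If `X` is Hausdorff then `d(X) ≤ πχ(X)^(c(X)·dψ_c(X))`. -/
theorem stmt_6 (X : Type u) [TopologicalSpace X] [T2Space X] :
    dens X ≤ piChar X ^ (cellularity X * dPsiC X) := by
  classical
  rcases isEmpty_or_nonempty X with hX | hX
  · have h0 : dens X ≤ 0 := by
      refine csInf_le (OrderBot.bddBelow _) ⟨∅, fun x => (IsEmpty.false x).elim, by simp⟩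
    exact h0.trans (zero_le (a := _))
  obtain ⟨x₀⟩ := hX
  have hbig1 : ℵ₀ ≤ max ℵ₀ #(Set X) := le_max_left _ _
  -- local π-bases of size at most piChar X
  have hpcne : ∀ x : X, {κ : Cardinal.{u} | ℵ₀ ≤ κ ∧
      ∃ 𝒱 : Set (Set X), IsLocalPiBase X x 𝒱 ∧ #𝒱 ≤ κ}.Nonempty := by
    intro x
    refine ⟨max ℵ₀ #(Set X), hbig1, ⟨{V : Set X | IsOpen V ∧ V.Nonempty}, ⟨fun V hV => hV, ?_⟩,
      le_trans (Cardinal.mk_set_le _) (le_max_right _ _)⟩⟩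
    exact fun U hU hxU => ⟨U, ⟨hU, ⟨x, hxU⟩⟩, subset_rfl⟩
  have hpcle : ∀ x : X, piCharPoint X x ≤ piChar X :=
    fun x => le_ciSup (Cardinal.bddAbove_range _) x
  have hBex : ∀ x : X, ∃ 𝒱 : Set (Set X), IsLocalPiBase X x 𝒱 ∧ #𝒱 ≤ piChar X := by
    intro x
    obtain ⟨h1, 𝒱, h2, h3⟩ := csInf_mem (hpcne x)
    exact ⟨𝒱, h2, le_trans h3 (hpcle x)⟩
  have hℵπ : ℵ₀ ≤ piChar X := le_trans (csInf_mem (hpcne x₀)).1 (hpcle x₀)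
  choose B hB using hBex
  -- cellularity facts
  have hcellne : {κ : Cardinal.{u} | ℵ₀ ≤ κ ∧ ∀ 𝒞 : Set (Set X),
      (∀ U ∈ 𝒞, IsOpen U ∧ U.Nonempty) → 𝒞.PairwiseDisjoint id → #𝒞 ≤ κ}.Nonempty :=
    ⟨max ℵ₀ #(Set X), hbig1, fun 𝒞 _ _ => le_trans (Cardinal.mk_set_le _) (le_max_right _ _)⟩
  have hcellmem := csInf_mem hcellne
  have hcell1 : ℵ₀ ≤ cellularity X := hcellmem.1
  have hcell2 : ∀ 𝒞 : Set (Set X), (∀ U ∈ 𝒞, IsOpen U ∧ U.Nonempty) →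
      𝒞.PairwiseDisjoint id → #𝒞 ≤ cellularity X := hcellmem.2
  -- psiCPoint facts
  have hψne : ∀ x : X, {κ : Cardinal.{u} | ℵ₀ ≤ κ ∧ ∃ 𝒱 : Set (Set X),
      (∀ V ∈ 𝒱, IsOpen V ∧ x ∈ V) ∧ #𝒱 ≤ κ ∧ (⋂ V ∈ 𝒱, closure V) = {x}}.Nonempty := by
    intro x
    exact ⟨max ℵ₀ #(Set X), hbig1, ⟨{V : Set X | IsOpen V ∧ x ∈ V}, fun V hV => hV,
      le_trans (Cardinal.mk_set_le _) (le_max_right _ _), aux_t2_inter x⟩⟩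
  -- dPsiC facts
  have hdψne : {κ : Cardinal.{u} | ℵ₀ ≤ κ ∧ ∃ D : Set X, Dense D ∧
      ∀ d ∈ D, psiCPoint X d ≤ κ}.Nonempty :=
    ⟨max ℵ₀ #(Set X), hbig1, univ, dense_univ, fun d _ =>
      csInf_le (OrderBot.bddBelow _) ⟨hbig1, {V : Set X | IsOpen V ∧ d ∈ V}, fun V hV => hV,
        le_trans (Cardinal.mk_set_le _) (le_max_right _ _), aux_t2_inter d⟩⟩
  obtain ⟨hdψ1, D, hDdense, hDψ⟩ := csInf_mem hdψne
  set π : Cardinal.{u} := piChar X with hπdef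
  set κ : Cardinal.{u} := cellularity X * dPsiC X with hκdef
  have h1c : (1 : Cardinal.{u}) ≤ cellularity X := le_trans one_le_aleph0 hcell1
  have h1d : (1 : Cardinal.{u}) ≤ dPsiC X := le_trans one_le_aleph0 hdψ1
  have hcellκ : cellularity X ≤ κ := by
    rw [hκdef]
    calc cellularity X = cellularity X * 1 := (mul_one _).symm
      _ ≤ cellularity X * dPsiC X := mul_le_mul' le_rfl h1d
  have hdψκ : dPsiC X ≤ κ := by
    rw [hκdef]
    calc dPsiC X = 1 * dPsiC X := (one_mul _).symm
      _ ≤ cellularity X * dPsiC X := mul_le_mul' h1c le_rfl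
  have hκℵ : ℵ₀ ≤ κ := le_trans hcell1 hcellκ
  -- witness function
  obtain ⟨w, hwspec⟩ : ∃ w : (κ.out → κ.out → Set X) → X, ∀ g : κ.out → κ.out → Set X,
      (((⋃ i, closure (⋃ j, g i j))ᶜ : Set X).Nonempty) →
        w g ∈ ((⋃ i, closure (⋃ j, g i j))ᶜ : Set X) := by
    refine ⟨fun g => if h : (((⋃ i, closure (⋃ j, g i j))ᶜ : Set X).Nonempty)
      then h.choose else x₀, fun g hne => ?_⟩
    simp only [dif_pos hne]
    exact hne.choose_spec
  set E : Set X := Stmt6Aux.FF x₀ B w (Order.succ κ).ord with hEdef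
  have hEcard : #E ≤ π ^ κ := by
    rw [hEdef]
    exact Stmt6Aux.card_FF x₀ B κ π hκℵ hℵπ (fun x => (hB x).2) w _ le_rfl
  have hx₀E : x₀ ∈ E := by rw [hEdef]; exact Stmt6Aux.mem_FF x₀ B w _
  have hEdense : Dense E := by
    by_contra hnd
    have hne : ∃ x : X, x ∉ closure E := by
      by_contra h
      push_neg at h
      exact hnd h
    obtain ⟨xout, hxout⟩ := hne
    have hU₀open : IsOpen ((closure E)ᶜ) := isClosed_closure.isOpen_compl
    obtain ⟨d, hdD, hdU₀⟩ := hDdense.exists_mem_open hU₀open ⟨xout, hxout⟩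
    -- pseudo-neighborhoods of d
    obtain ⟨hψ1, 𝒱₀, h𝒱₀, h𝒱₀card, h𝒱₀int⟩ := csInf_mem (hψne d)
    have h𝒱₀κ : #𝒱₀ ≤ κ := le_trans h𝒱₀card (le_trans (hDψ d hdD) hdψκ)
    have h𝒱dmem : ∀ W ∈ (fun V => V ∩ (closure E)ᶜ) '' 𝒱₀,
        IsOpen W ∧ d ∈ W ∧ W ⊆ (closure E)ᶜ := by
      rintro W ⟨V, hV, rfl⟩
      exact ⟨(h𝒱₀ V hV).1.inter hU₀open, ⟨(h𝒱₀ V hV).2, hdU₀⟩, inter_subset_right⟩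
    have h𝒱dcard : #((fun V => V ∩ (closure E)ᶜ) '' 𝒱₀) ≤ κ :=
      le_trans Cardinal.mk_image_le h𝒱₀κ
    have h𝒱dint : (⋂ W ∈ (fun V => V ∩ (closure E)ᶜ) '' 𝒱₀, closure W) ⊆ {d} := by
      rw [biInter_image]
      refine subset_trans (iInter₂_mono fun V hV => closure_mono inter_subset_left) ?_
      exact h𝒱₀int.subset
    -- color function
    have hcolex : ∀ a ∈ E, ∃ W ∈ (fun V => V ∩ (closure E)ᶜ) '' 𝒱₀, a ∉ closure W := by
      intro a haE
      by_contra hcon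
      push_neg at hcon
      have hmem : a ∈ ⋂ W ∈ (fun V => V ∩ (closure E)ᶜ) '' 𝒱₀, closure W :=
        mem_iInter₂.2 hcon
      have had : a = d := mem_singleton_iff.1 (h𝒱dint hmem)
      exact hdU₀ (had ▸ subset_closure haE)
    choose! col hcol1 hcol2 using hcolex
    -- refinement families
    have hrefine : ∀ W : Set X,
        ∃ 𝒱 ⊆ (⋃ a ∈ {a' ∈ E | col a' = W}, {b ∈ B a | b ⊆ (closure (col a))ᶜ}),
          #𝒱 ≤ κ ∧ ⋃₀ (⋃ a ∈ {a' ∈ E | col a' = W}, {b ∈ B a | b ⊆ (closure (col a))ᶜ})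
            ⊆ closure (⋃₀ 𝒱) := by
      intro W
      refine aux_cell_refine κ (fun 𝒞 h1 h2 => le_trans (hcell2 𝒞 h1 h2) hcellκ) _ ?_
      intro b hb
      obtain ⟨a, ha, hba⟩ := mem_iUnion₂.1 hb
      exact (hB a).1.1 b hba.1
    choose VV hVV1 hVV2 hVV3 using hrefine
    -- enumerations
    have hcolx₀ : col x₀ ∈ (fun V => V ∩ (closure E)ᶜ) '' 𝒱₀ := hcol1 x₀ hx₀E
    obtain ⟨e, he1, he2⟩ := aux_exists_enum κ.out ((fun V => V ∩ (closure E)ᶜ) '' 𝒱₀)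
      (h𝒱dcard.trans_eq (Cardinal.mk_out κ).symm) (col x₀)
    have he1' : ∀ k, e k ∈ (fun V => V ∩ (closure E)ᶜ) '' 𝒱₀ := by
      intro k
      rcases mem_insert_iff.1 (he1 k) with h | h
      · rw [h]; exact hcolx₀
      · exact h
    obtain ⟨g, hg1, hg2⟩ : ∃ g : κ.out → κ.out → Set X,
        (∀ i j, g i j ∈ insert ∅ (VV (e i))) ∧ ∀ i, ∀ b ∈ VV (e i), ∃ j, g i j = b := by
      have hh := fun i : κ.out => aux_exists_enum κ.out (VV (e i))
        ((hVV2 (e i)).trans_eq (Cardinal.mk_out κ).symm) ∅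
      choose gg hgg1 hgg2 using hh
      exact ⟨gg, fun i j => hgg1 i j, fun i => hgg2 i⟩
    -- validity of g over E
    have hvalid : Stmt6Aux.Valid B E g := by
      intro i j
      rcases mem_insert_iff.1 (hg1 i j) with h | h
      · exact Or.inr (mem_singleton_iff.2 h)
      · have hbH := hVV1 (e i) h
        obtain ⟨a, ha, hba⟩ := mem_iUnion₂.1 hbH
        exact Or.inl (mem_iUnion₂.2 ⟨a, ha.1, hba.1⟩)
    have hwgE : w g ∈ E := by
      rw [hEdef]
      refine Stmt6Aux.closure_FF x₀ B κ hκℵ w g ?_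
      rw [hEdef] at hvalid
      exact hvalid
    -- d is outside the union of closures
    have hdout : d ∈ ((⋃ i, closure (⋃ j, g i j))ᶜ : Set X) := by
      rw [mem_compl_iff]
      intro hd
      obtain ⟨i, hdi⟩ := mem_iUnion.1 hd
      have hei := h𝒱dmem (e i) (he1' i)
      rw [mem_closure_iff] at hdi
      obtain ⟨z, hz1, hz2⟩ := hdi (e i) hei.1 hei.2.1
      obtain ⟨j, hzj⟩ := mem_iUnion.1 hz2
      rcases mem_insert_iff.1 (hg1 i j) with h | h
      · rw [h] at hzj; exact hzj
      · have hbH := hVV1 (e i) h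
        obtain ⟨a, ha, hba⟩ := mem_iUnion₂.1 hbH
        have hz3 : z ∈ (closure (col a))ᶜ := hba.2 hzj
        rw [ha.2] at hz3
        exact hz3 (subset_closure hz1)
    -- every point of E is inside the union of closures
    have hEsub : ∀ a ∈ E, a ∈ ⋃ i, closure (⋃ j, g i j) := by
      intro a haE
      have hstep1 : a ∈ closure (⋃₀ {b ∈ B a | b ⊆ (closure (col a))ᶜ}) := by
        rw [mem_closure_iff]
        intro N hN haN
        have hopen : IsOpen (N ∩ (closure (col a))ᶜ) := hN.inter isClosed_closure.isOpen_compl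
        have hmem : a ∈ N ∩ (closure (col a))ᶜ := ⟨haN, hcol2 a haE⟩
        obtain ⟨b, hbB, hbsub⟩ := (hB a).1.2 _ hopen hmem
        obtain ⟨z, hz⟩ := ((hB a).1.1 b hbB).2
        exact ⟨z, (hbsub hz).1, ⟨b, ⟨hbB, fun y hy => (hbsub hy).2⟩, hz⟩⟩
      have hsub2 : ⋃₀ {b ∈ B a | b ⊆ (closure (col a))ᶜ} ⊆ closure (⋃₀ VV (col a)) := by
        refine subset_trans ?_ (hVV3 (col a))
        refine sUnion_subset_sUnion ?_
        intro b hb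
        exact mem_iUnion₂.2 ⟨a, ⟨haE, rfl⟩, hb⟩
      have hstep3 : a ∈ closure (⋃₀ VV (col a)) := by
        have hcc := closure_mono hsub2 hstep1
        rwa [closure_closure] at hcc
      obtain ⟨k, hk⟩ := he2 (col a) (hcol1 a haE)
      rw [← hk] at hstep3
      refine mem_iUnion.2 ⟨k, closure_mono ?_ hstep3⟩
      rintro z ⟨b, hbVV, hzb⟩
      obtain ⟨j, hj⟩ := hg2 k b hbVV
      exact mem_iUnion.2 ⟨j, hj ▸ hzb⟩
    exact (hwspec g ⟨d, hdout⟩) (hEsub (w g) hwgE)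
  have hfin : dens X ≤ #E := csInf_le (OrderBot.bddBelow _) ⟨E, hEdense, rfl⟩
  exact le_trans hfin hEcard
end

section
/- If X is a Hausdorff space, then nq(X) ≤ dψ_c(X). -/
open Cardinal Set TopologicalSpace

universe u

/-- In a Hausdorff space, the intersection of closures of all open neighborhoods
of a point is that point. -/
lemma t2_iInter_closure_nbhds (X : Type u) [TopologicalSpace X] [T2Space X] (x : X) :
    (⋂ V ∈ {V : Set X | IsOpen V ∧ x ∈ V}, closure V) = {x} := by
  apply subset_antisymm
  · intro y hy
    simp only [mem_iInter, mem_setOf_eq] at hy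
    by_contra hne
    obtain ⟨U, W, hU, hW, hxU, hyW, hUW⟩ := t2_separation (Ne.symm (by simpa using hne))
    have := hy U ⟨hU, hxU⟩
    rw [mem_closure_iff] at this
    obtain ⟨z, hz⟩ := this W hW hyW
    exact absurd hUW (by rw [Set.disjoint_left]; intro h; exact h hz.2 hz.1)
  · intro y hy
    simp only [mem_singleton_iff] at hy; subst hy
    exact mem_iInter₂.2 fun V hV => subset_closure hV.2

/-- In a Hausdorff space, the closed pseudocharacter at a point is a member of its
defining set (the infimum is attained). -/
lemma psiCPoint_mem (X : Type u) [TopologicalSpace X] [T2Space X] (x : X) :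
    psiCPoint X x ∈ {κ : Cardinal.{u} | ℵ₀ ≤ κ ∧ ∃ 𝒱 : Set (Set X),
      (∀ V ∈ 𝒱, IsOpen V ∧ x ∈ V) ∧ #𝒱 ≤ κ ∧ (⋂ V ∈ 𝒱, closure V) = {x}} := by
  apply csInf_mem
  refine ⟨ℵ₀ ⊔ #({V : Set X | IsOpen V ∧ x ∈ V}), le_sup_left,
    {V : Set X | IsOpen V ∧ x ∈ V}, fun V hV => hV, le_sup_right,
    t2_iInter_closure_nbhds X x⟩

/-- If `X` is Hausdorff then `nq(X) ≤ dψ_c(X)`. -/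
theorem stmt_7 (X : Type u) [TopologicalSpace X] [T2Space X] :
    nq X ≤ dPsiC X := by
  set S : Set Cardinal.{u} :=
    {κ : Cardinal.{u} | ℵ₀ ≤ κ ∧ ∃ D : Set X, Dense D ∧ ∀ d ∈ D, psiCPoint X d ≤ κ}
    with hS
  -- S is nonempty
  have hSne : S.Nonempty := by
    refine ⟨ℵ₀ ⊔ ⨆ x : X, psiCPoint X x, le_sup_left, Set.univ, dense_univ,
      fun d _ => le_trans ?_ le_sup_right⟩
    exact le_ciSup (Cardinal.bddAbove_range _) d
  have hmem : dPsiC X ∈ S := csInf_mem hSne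
  obtain ⟨hinf, D, hD, hDle⟩ := hmem
  -- show dPsiC X ∈ nqSet X
  have : dPsiC X ∈ nqSet X := by
    refine ⟨hinf, fun U hU hUne => ?_⟩
    obtain ⟨d, hdD, hdU⟩ := hD.exists_mem_open hU hUne
    obtain ⟨hinf', 𝒱, h𝒱, hcard, hclo⟩ := psiCPoint_mem X d
    refine ⟨𝒱, fun V hV => (h𝒱 V hV).1, le_trans hcard (le_trans (hDle d hdD) le_rfl),
      ⟨d, fun V hV => (h𝒱 V hV).2⟩, ?_⟩
    rw [hclo]
    exact singleton_subset_iff.2 hdU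
  exact csInf_le (OrderBot.bddBelow _) this
end

section
/- For any topological space X, |RO(X)| ≤ πw(X)^(c(X)), where RO(X) is the set of regular open subsets of X. -/
open Cardinal Set TopologicalSpace

universe u

/-- For any space `X`, `|RO(X)| ≤ πw(X)^(c(X))`. -/
theorem stmt_10 (X : Type u) [TopologicalSpace X] :
    cardRO X ≤ piWeight X ^ cellularity X := by
  have hpw : piWeight X ∈ {κ : Cardinal.{u} | ℵ₀ ≤ κ ∧ ∃ 𝒱 : Set (Set X),
      IsPiBase X 𝒱 ∧ #𝒱 ≤ κ} := by
    apply csInf_mem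
    exact ⟨max ℵ₀ #{U : Set X | IsOpen U ∧ U.Nonempty}, le_max_left _ _,
      {U : Set X | IsOpen U ∧ U.Nonempty},
      ⟨fun V hV => hV, fun U hU hne => ⟨U, ⟨hU, hne⟩, subset_rfl⟩⟩, le_max_right _ _⟩
  obtain ⟨hpw0, 𝒱, ⟨h𝒱open, h𝒱base⟩, h𝒱card⟩ := hpw
  have hc : cellularity X ∈ {κ : Cardinal.{u} | ℵ₀ ≤ κ ∧ ∀ 𝒞 : Set (Set X),
      (∀ U ∈ 𝒞, IsOpen U ∧ U.Nonempty) → 𝒞.PairwiseDisjoint id → #𝒞 ≤ κ} := by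
    apply csInf_mem
    exact ⟨max ℵ₀ #(Set X), le_max_left _ _, fun 𝒞 _ _ =>
      le_trans (Cardinal.mk_set_le 𝒞) (le_max_right _ _)⟩
  obtain ⟨hc0, hcbound⟩ := hc
  have key : ∀ R : Set X, ∃ 𝒲 : Set (Set X),
      Maximal (· ∈ {𝒲 : Set (Set X) | 𝒲 ⊆ 𝒱 ∧ (∀ W ∈ 𝒲, W ⊆ R) ∧
        𝒲.PairwiseDisjoint id}) 𝒲 := by
    intro R
    apply zorn_subset
    intro c hcS hchain
    refine ⟨⋃₀ c, ⟨?_, ?_, ?_⟩, fun s hs => subset_sUnion_of_mem hs⟩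
    · exact sUnion_subset fun t ht => (hcS ht).1
    · rintro W ⟨t, ht, hWt⟩
      exact (hcS ht).2.1 W hWt
    · rintro W ⟨t, ht, hWt⟩ W' ⟨t', ht', hW't'⟩ hne
      rcases hchain.total ht ht' with h | h
      · exact (hcS ht').2.2 (h hWt) hW't' hne
      · exact (hcS ht).2.2 hWt (h hW't') hne
  choose F hF using key
  have hclos : ∀ R : Set X, IsOpen R → closure (⋃₀ F R) = closure R := by
    intro R hR
    apply subset_antisymm
    · exact closure_mono (sUnion_subset (hF R).1.2.1)
    · apply closure_minimal _ isClosed_closure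
      intro x hx
      rw [mem_closure_iff]
      intro W hW hxW
      obtain ⟨V, hV𝒱, hVsub⟩ := h𝒱base (W ∩ R) (hW.inter hR) ⟨x, hxW, hx⟩
      have hVne : V.Nonempty := (h𝒱open V hV𝒱).2
      by_cases hdis : ∀ W' ∈ F R, Disjoint V W'
      · exfalso
        have hVnotmem : V ∉ F R := fun hmem =>
          hVne.ne_empty (disjoint_self.mp (hdis V hmem))
        have hins : insert V (F R) ∈ {𝒲 : Set (Set X) | 𝒲 ⊆ 𝒱 ∧ (∀ W ∈ 𝒲, W ⊆ R) ∧
            𝒲.PairwiseDisjoint id} := by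
          refine ⟨insert_subset hV𝒱 (hF R).1.1, ?_, ?_⟩
          · rintro W' (rfl | hW')
            · exact hVsub.trans inter_subset_right
            · exact (hF R).1.2.1 W' hW'
          · exact (hF R).1.2.2.insert fun W' hW' _ => hdis W' hW'
        exact hVnotmem ((hF R).2 hins (subset_insert _ _) (mem_insert _ _))
      · push_neg at hdis
        obtain ⟨W', hW', hnd⟩ := hdis
        obtain ⟨y, hyV, hyW'⟩ := Set.not_disjoint_iff.mp hnd
        exact ⟨y, (hVsub hyV).1, W', hW', hyW'⟩
  have hinj : Function.Injective (fun R : {R : Set X | R = interior (closure R)} =>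
      (⟨F R.1, (hF R.1).1.1, hcbound (F R.1)
        (fun W hW => h𝒱open W ((hF R.1).1.1 hW)) (hF R.1).1.2.2⟩ :
        {t : Set (Set X) // t ⊆ 𝒱 ∧ #t ≤ cellularity X})) := by
    rintro ⟨R1, hR1⟩ ⟨R2, hR2⟩ h
    simp only [Subtype.mk.injEq] at h ⊢
    have hR1o : IsOpen R1 := by rw [hR1]; exact isOpen_interior
    have hR2o : IsOpen R2 := by rw [hR2]; exact isOpen_interior
    have : closure R1 = closure R2 := by
      rw [← hclos R1 hR1o, ← hclos R2 hR2o, h]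
    rw [hR1, hR2, this]
  calc cardRO X ≤ #{t : Set (Set X) // t ⊆ 𝒱 ∧ #t ≤ cellularity X} :=
        Cardinal.mk_le_of_injective hinj
    _ ≤ max #𝒱 ℵ₀ ^ cellularity X := Cardinal.mk_bounded_subset_le 𝒱 _
    _ ≤ piWeight X ^ cellularity X :=
        Cardinal.power_le_power_right (max_le h𝒱card hpw0)
end

section
/- For any Hausdorff space X, |X| ≤ |RO(X)|^(wψ_c(X)), where RO(X) is the set of regular open subsets of X. -/
open Cardinal Set TopologicalSpace

universe u

lemma aux_closure_interior_closure {X : Type u} [TopologicalSpace X] {V : Set X}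
    (hV : IsOpen V) : closure (interior (closure V)) = closure V :=
  subset_antisymm (closure_minimal interior_subset isClosed_closure)
    (closure_mono (interior_maximal subset_closure hV))

lemma aux_exists_family (X : Type u) [TopologicalSpace X] [T2Space X] (x : X) :
    ∃ 𝒱 : Set (Set X), (∀ V ∈ 𝒱, IsOpen V) ∧ #𝒱 ≤ wPsiC X ∧
      (⋂ V ∈ 𝒱, closure V) = {x} := by
  have hne : {κ : Cardinal.{u} | ℵ₀ ≤ κ ∧ ∃ 𝒱 : Set (Set X),
      (∀ V ∈ 𝒱, IsOpen V) ∧ #𝒱 ≤ κ ∧ (⋂ V ∈ 𝒱, closure V) = {x}}.Nonempty := by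
    refine ⟨max ℵ₀ #(Set X), le_max_left _ _, {U : Set X | IsOpen U ∧ x ∈ U}, ?_, ?_, ?_⟩
    · exact fun V hV => hV.1
    · exact (Cardinal.mk_set_le _).trans (le_max_right _ _)
    · apply subset_antisymm
      · intro y hy
        simp only [Set.mem_iInter] at hy
        by_contra hyx
        have hyx' : x ≠ y := fun h => hyx (h ▸ rfl)
        obtain ⟨U, W, hU, hW, hxU, hyW, hd⟩ := t2_separation hyx'
        have hsub : closure U ⊆ Wᶜ :=
          closure_minimal (Set.disjoint_left.1 hd) hW.isClosed_compl
        exact hsub (hy U ⟨hU, hxU⟩) hyW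
      · intro y hy
        simp only [Set.mem_singleton_iff] at hy
        subst hy
        exact Set.mem_iInter₂.2 fun V hV => subset_closure hV.2
  obtain ⟨_, 𝒱, h1, h2, h3⟩ := csInf_mem hne
  exact ⟨𝒱, h1, h2.trans (le_ciSup (Cardinal.bddAbove_range _) x), h3⟩

/-- For any Hausdorff space `X`, `|X| ≤ |RO(X)|^(wψ_c(X))`. -/
theorem stmt_11 (X : Type u) [TopologicalSpace X] [T2Space X] :
    #X ≤ cardRO X ^ wPsiC X := by
  rcases subsingleton_or_nontrivial X with hs | hnt
  · have h1 : #X ≤ 1 := Cardinal.le_one_iff_subsingleton.2 hs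
    have h2 : (1 : Cardinal) ≤ cardRO X := by
      rw [Cardinal.one_le_iff_ne_zero, cardRO, Cardinal.mk_ne_zero_iff]
      exact ⟨⟨∅, by simp⟩⟩
    calc #X ≤ 1 := h1
      _ = 1 ^ wPsiC X := Cardinal.one_power.symm
      _ ≤ cardRO X ^ wPsiC X := Cardinal.power_le_power_right h2
  -- main case
  choose 𝒱 hop hcard hint using aux_exists_family X
  set K := (wPsiC X).out with hK
  have hKcard : #K = wPsiC X := Cardinal.mk_out _
  have hVne : ∀ x : X, (𝒱 x).Nonempty := by
    intro x
    rcases Set.eq_empty_or_nonempty (𝒱 x) with h | h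
    · exfalso
      have := hint x
      rw [h] at this
      simp only [Set.mem_empty_iff_false, Set.iInter_of_empty, Set.iInter_univ] at this
      obtain ⟨y, hy⟩ := exists_ne x
      exact hy (by rw [← Set.mem_singleton_iff, ← this]; trivial)
    · exact h
  have hsur : ∀ x : X, ∃ s : K → Set X, Set.range s = 𝒱 x := by
    intro x
    have : #(𝒱 x) ≤ #K := by rw [hKcard]; exact hcard x
    obtain ⟨i⟩ := this
    have : Nonempty (𝒱 x) := (hVne x).to_subtype
    have hsurj : Function.Surjective (Function.invFun (⇑i)) :=
      Function.invFun_surjective i.injective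
    refine ⟨fun k => ((Function.invFun (⇑i) k : ↥(𝒱 x)) : Set X), ?_⟩
    ext V
    constructor
    · rintro ⟨k, rfl⟩; exact ((Function.invFun (⇑i) k : ↥(𝒱 x))).2
    · intro hV
      obtain ⟨k, hk⟩ := hsurj ⟨V, hV⟩
      exact ⟨k, congrArg Subtype.val hk⟩
  choose s hs using hsur
  have hsopen : ∀ (x : X) (k : K), IsOpen (s x k) := by
    intro x k
    exact hop x _ (by rw [← hs x]; exact ⟨k, rfl⟩)
  have hIx : ∀ x : X, (⋂ k, closure (s x k)) = {x} := by
    intro x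
    rw [← hint x, ← hs x, Set.biInter_range]
  set RO := {R : Set X | R = interior (closure R)} with hRO
  have hreg : ∀ (x : X) (k : K), interior (closure (s x k)) ∈ RO := by
    intro x k
    show _ = interior (closure _)
    rw [aux_closure_interior_closure (hsopen x k)]
  set Φ : X → (K → RO) := fun x k => ⟨interior (closure (s x k)), hreg x k⟩ with hΦ
  have hinj : Function.Injective Φ := by
    intro x y hxy
    have hcl : ∀ k : K, closure (s x k) = closure (s y k) := by
      intro k
      have h1 : (Φ x k : Set X) = (Φ y k : Set X) := by rw [hxy]
      simp only [hΦ] at h1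
      calc closure (s x k) = closure (interior (closure (s x k))) :=
            (aux_closure_interior_closure (hsopen x k)).symm
        _ = closure (interior (closure (s y k))) := by rw [h1]
        _ = closure (s y k) := aux_closure_interior_closure (hsopen y k)
    have : ({x} : Set X) = {y} := by
      rw [← hIx x, ← hIx y]
      exact Set.iInter_congr hcl
    exact Set.singleton_eq_singleton_iff.1 this
  calc #X ≤ #(K → RO) := Cardinal.mk_le_of_injective hinj
    _ = #RO ^ #K := (Cardinal.power_def _ _).symm
    _ = cardRO X ^ wPsiC X := by rw [hKcard]; rfl
end
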